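/- arXiv:0906.4509 — 5 statements merged into one kernel-verified Lean document; each statement's English description precedes it below -/
import Mathlib

section
/- Let f be the map sending W ∈ 𝒜 to the block [σ(W∩H) ∪ (W∖H)] and W ∈ ℬ to the block [σ(W)]. Then f is a bijection from 𝒜 ∪ ℬ onto the block set 𝒜' ∪ ℬ' of the Jungnickel–Tonchev design, and for all W₁, W₂ ∈ 𝒜 ∪ ℬ, W₁ and W₂ are adjacent in the twisted Grassmann graph J̃_q(2e+1,e) if and only if |f(W₁) ∩ f(W₂)| = (q^e − 1)/(q − 1). Consequently J̃_q(2e+1,e) is isomorphic to the block graph of the design, where two blocks are adjacent when their intersection has size (q^e − 1)/(q − 1). -/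
/-- The set of projective points (1-dimensional subspaces) contained in a subset `S` of `V`. -/
def projPts (K : Type*) {V : Type*} [Field K] [AddCommGroup V] [Module K V]
    (S : Set V) : Set (Submodule K V) :=
  {P | Module.finrank K P = 1 ∧ (P : Set V) ⊆ S}

/-- `𝒜`: the (e+1)-dimensional subspaces of `V` not contained in `H`. -/
def setA {K V : Type*} [Field K] [AddCommGroup V] [Module K V]
    (e : ℕ) (H : Submodule K V) : Set (Submodule K V) :=
  {W | Module.finrank K W = e + 1 ∧ ¬ W ≤ H}

/-- `ℬ`: the (e-1)-dimensional subspaces of `H`. -/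
def setB {K V : Type*} [Field K] [AddCommGroup V] [Module K V]
    (e : ℕ) (H : Submodule K V) : Set (Submodule K V) :=
  {W | Module.finrank K W = e - 1 ∧ W ≤ H}

/-- The block `[σ(W ∩ H) ∪ (W \ H)]` associated to `W ∈ 𝒜`. -/
def blockA {K V : Type*} [Field K] [AddCommGroup V] [Module K V]
    (σ : Submodule K V → Submodule K V) (H W : Submodule K V) : Set (Submodule K V) :=
  projPts K ((σ (W ⊓ H) : Set V) ∪ ((W : Set V) \ (H : Set V)))

/-- The block `[σ(W)]` associated to `W ∈ ℬ`. -/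
def blockB {K V : Type*} [Field K] [AddCommGroup V] [Module K V]
    (σ : Submodule K V → Submodule K V) (W : Submodule K V) : Set (Submodule K V) :=
  projPts K (σ W : Set V)

/-- The block set `𝒜' ∪ ℬ'` of the Jungnickel–Tonchev design. -/
def blocksJT {K V : Type*} [Field K] [AddCommGroup V] [Module K V]
    (e : ℕ) (σ : Submodule K V → Submodule K V) (H : Submodule K V) :
    Set (Set (Submodule K V)) :=
  (blockA σ H '' setA e H) ∪
    {B | ∃ W : Submodule K V, Module.finrank K W = e + 1 ∧ W ≤ H ∧ B = projPts K (W : Set V)}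

open Classical in
/-- The map `f` sending `W ∈ 𝒜` to `[σ(W ∩ H) ∪ (W \ H)]` and `W ∈ ℬ` to `[σ(W)]`. -/
noncomputable def fJT {K V : Type*} [Field K] [AddCommGroup V] [Module K V]
    (σ : Submodule K V → Submodule K V) (e : ℕ) (H : Submodule K V)
    (W : Submodule K V) : Set (Submodule K V) :=
  if W ∈ setA e H then blockA σ H W else blockB σ W

/-- The adjacency rule of the twisted Grassmann graph. -/
def twistedAdj {K V : Type*} [Field K] [AddCommGroup V] [Module K V]
    (e : ℕ) (H : Submodule K V) (W₁ W₂ : Submodule K V) : Prop :=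
  (W₁ ∈ setA e H ∧ W₂ ∈ setA e H ∧ Module.finrank K ↥(W₁ ⊓ W₂) = e) ∨
  (W₁ ∈ setA e H ∧ W₂ ∈ setB e H ∧ W₂ ≤ W₁) ∨
  (W₁ ∈ setB e H ∧ W₂ ∈ setA e H ∧ W₁ ≤ W₂) ∨
  (W₁ ∈ setB e H ∧ W₂ ∈ setB e H ∧ Module.finrank K ↥(W₁ ⊓ W₂) = e - 2)

/-- The twisted Grassmann graph `J̃_q(2e+1, e)`, on the vertex set `𝒜 ∪ ℬ`. -/
def twistedGraph {K V : Type*} [Field K] [AddCommGroup V] [Module K V]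
    (e : ℕ) (H : Submodule K V) : SimpleGraph {W : Submodule K V // W ∈ setA e H ∪ setB e H} :=
  SimpleGraph.fromRel fun W₁ W₂ => twistedAdj e H W₁.1 W₂.1

/-- The block graph of the Jungnickel–Tonchev design: two distinct blocks are adjacent
whenever their intersection has size `(q^e - 1)/(q - 1)`. -/
def blockGraphJT {K V : Type*} [Field K] [AddCommGroup V] [Module K V]
    (q e : ℕ) (σ : Submodule K V → Submodule K V) (H : Submodule K V) :
    SimpleGraph {B : Set (Submodule K V) // B ∈ blocksJT e σ H} :=
  SimpleGraph.fromRel fun B₁ B₂ => (B₁.1 ∩ B₂.1).ncard = (q ^ e - 1) / (q - 1)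

set_option linter.unusedSectionVars false
set_option linter.unusedVariables false
set_option maxHeartbeats 1000000

open Module Submodule Set Finset

namespace JTaux

/-- geometric sum -/
def gs (q d : ℕ) : ℕ := ∑ i ∈ Finset.range d, q ^ i

lemma geom_mul (q d : ℕ) (hq : 1 ≤ q) : (q - 1) * gs q d = q ^ d - 1 := by
  induction d with
  | zero => simp [gs]
  | succ d ih =>
    rw [gs, Finset.sum_range_succ, Nat.mul_add, ← gs, ih, pow_succ', Nat.sub_one_mul]
    have h1 : 1 ≤ q ^ d := Nat.one_le_pow _ _ hq
    have h2 : q ^ d ≤ q * q ^ d := Nat.le_mul_of_pos_left _ (by omega)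
    omega

lemma gs_strictMono {q : ℕ} (hq : 2 ≤ q) : StrictMono (gs q) := by
  apply strictMono_nat_of_lt_succ
  intro n
  simp only [gs, Finset.sum_range_succ]
  have : 0 < q ^ n := Nat.pow_pos (by omega)
  omega

lemma gs_inj {q a b : ℕ} (hq : 2 ≤ q) (h : gs q a = gs q b) : a = b :=
  (gs_strictMono hq).injective h

lemma gs_succ (q d : ℕ) : gs q (d + 1) = gs q d + q ^ d := by
  simp [gs, Finset.sum_range_succ]

lemma geom_div {q d : ℕ} (hq : 2 ≤ q) : (q ^ d - 1) / (q - 1) = gs q d := by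
  rw [← geom_mul q d (by omega), Nat.mul_div_cancel_left _ (by omega)]

section Basic

variable {K V : Type*} [Field K] [AddCommGroup V] [Module K V] [FiniteDimensional K V]

/-- set of points of a submodule -/
def pts (U : Submodule K V) : Set (Submodule K V) :=
  {P | finrank K ↥P = 1 ∧ P ≤ U}

/-- set of points of `U` outside `H` -/
def ptsOut (U H : Submodule K V) : Set (Submodule K V) :=
  {P | finrank K ↥P = 1 ∧ P ≤ U ∧ ¬ P ≤ H}

lemma projPts_submodule (U : Submodule K V) : projPts K (U : Set V) = pts U := by
  ext P; simp [projPts, pts, SetLike.coe_subset_coe]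

lemma eq_span_of_mem {P : Submodule K V} (hP : finrank K ↥P = 1)
    {v : V} (hv : v ∈ P) (hv0 : v ≠ 0) : P = Submodule.span K {v} := by
  have hle : Submodule.span K {v} ≤ P := (Submodule.span_singleton_le_iff_mem _ _).2 hv
  exact (eq_of_le_of_finrank_eq hle (by rw [finrank_span_singleton hv0, hP])).symm

lemma exists_ne_zero_mem {P : Submodule K V} (hP : finrank K ↥P = 1) :
    ∃ v ∈ P, v ≠ 0 := by
  have : P ≠ ⊥ := by
    intro h
    rw [h, finrank_bot] at hP
    omega
  exact (Submodule.ne_bot_iff P).1 this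

lemma pts_inter (U₁ U₂ : Submodule K V) : pts U₁ ∩ pts (K := K) U₂ = pts (U₁ ⊓ U₂) := by
  ext P
  simp only [pts, Set.mem_inter_iff, Set.mem_setOf_eq, le_inf_iff]
  tauto

lemma sSup_pts (U : Submodule K V) : sSup (pts U) = U := by
  apply le_antisymm
  · exact sSup_le (fun P hP => hP.2)
  · intro v hv
    by_cases hv0 : v = 0
    · simp [hv0]
    · exact le_sSup (show Submodule.span K {v} ∈ pts U from
        ⟨finrank_span_singleton hv0, (Submodule.span_singleton_le_iff_mem _ _).2 hv⟩)
        (Submodule.mem_span_singleton_self v)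

lemma span_mem_ptsOut {U H : Submodule K V} {v : V} (hvU : v ∈ U) (hvH : v ∉ H) :
    Submodule.span K {v} ∈ ptsOut U H := by
  have hv0 : v ≠ 0 := fun h => hvH (h ▸ H.zero_mem)
  refine ⟨finrank_span_singleton hv0, (Submodule.span_singleton_le_iff_mem _ _).2 hvU, ?_⟩
  intro hle
  exact hvH (hle (Submodule.mem_span_singleton_self v))

lemma sSup_ptsOut {U H : Submodule K V} (hU : ¬ U ≤ H) : sSup (ptsOut U H) = U := by
  apply le_antisymm
  · exact sSup_le (fun P hP => hP.2.1)
  · obtain ⟨w, hwU, hwH⟩ := SetLike.not_le_iff_exists.1 hU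
    intro v hv
    by_cases hvH : v ∈ H
    · have hvw : v + w ∉ H := fun h => hwH (by simpa using H.sub_mem h hvH)
      have h1 : Submodule.span K {v + w} ≤ sSup (ptsOut U H) :=
        le_sSup (span_mem_ptsOut (U.add_mem hv hwU) hvw)
      have h2 : Submodule.span K {w} ≤ sSup (ptsOut U H) :=
        le_sSup (span_mem_ptsOut hwU hwH)
      have : v = (v + w) - w := by abel
      rw [this]
      exact Submodule.sub_mem _ (h1 (Submodule.mem_span_singleton_self _))
        (h2 (Submodule.mem_span_singleton_self _))
    · exact le_sSup (span_mem_ptsOut hv hvH) (Submodule.mem_span_singleton_self v)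

lemma ptsOut_eq_diff (U H : Submodule K V) : ptsOut U H = pts U \ pts (U ⊓ H) := by
  ext P
  simp only [ptsOut, pts, Set.mem_diff, Set.mem_setOf_eq, le_inf_iff]
  tauto

lemma ptsOut_inter (U₁ U₂ H : Submodule K V) :
    ptsOut U₁ H ∩ ptsOut U₂ H = ptsOut (U₁ ⊓ U₂) H := by
  ext P
  simp only [ptsOut, Set.mem_inter_iff, Set.mem_setOf_eq, le_inf_iff]
  tauto

lemma pts_disjoint_ptsOut {U₁ U₂ H : Submodule K V} (h : U₁ ≤ H) :
    Disjoint (pts U₁) (ptsOut U₂ H) := by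
  rw [Set.disjoint_left]
  rintro P ⟨h1, h2⟩ ⟨_, _, h3⟩
  exact h3 (h2.trans h)

/-- rank of intersection with a hyperplane -/
lemma finrank_inf_hyperplane {H W : Submodule K V}
    (hH : finrank K ↥H + 1 = finrank K V) (hW : ¬ W ≤ H) :
    finrank K ↥(W ⊓ H) + 1 = finrank K ↥W := by
  have h1 : finrank K ↥(W ⊔ H) + finrank K ↥(W ⊓ H)
      = finrank K ↥W + finrank K ↥H := Submodule.finrank_sup_add_finrank_inf_eq W H
  have h2 : H < W ⊔ H := by
    rcases lt_or_eq_of_le (le_sup_right : H ≤ W ⊔ H) with h | h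
    · exact h
    · exact absurd (le_sup_left.trans h.ge) hW
  have h3 : finrank K ↥H < finrank K ↥(W ⊔ H) := Submodule.finrank_lt_finrank_of_lt h2
  have h4 : finrank K ↥(W ⊔ H) ≤ finrank K V := Submodule.finrank_le _
  omega

end Basic

section Counting

variable {K V : Type*} [Field K] [Fintype K] [AddCommGroup V] [Module K V] [FiniteDimensional K V]

open scoped Classical in
lemma ncard_pts (U : Submodule K V) :
    (pts U).ncard = gs (Fintype.card K) (finrank K ↥U) := by
  have : Finite V := Module.finite_of_finite K
  have : Fintype V := Fintype.ofFinite V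
  have : Finite (Submodule K V) :=
    Finite.of_injective (fun P => (P : Set V)) (SetLike.coe_injective)
  have : Fintype (Submodule K V) := Fintype.ofFinite _
  set q := Fintype.card K with hq
  have hq2 : 2 ≤ q := Fintype.one_lt_card
  set d := finrank K ↥U with hd
  set s : Finset V := Finset.univ.filter (fun v => v ∈ U ∧ v ≠ 0) with hs
  set t : Finset (Submodule K V) :=
    Finset.univ.filter (fun P => finrank K ↥P = 1 ∧ P ≤ U) with ht
  have cardP : ∀ P : Submodule K V,
      (Finset.univ.filter (fun v => v ∈ P ∧ v ≠ 0)).card = q ^ (finrank K ↥P) - 1 := by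
    intro P
    have h1 : Finset.univ.filter (fun v => v ∈ P ∧ v ≠ 0)
        = (Finset.univ.filter (fun v => v ∈ P)).erase 0 := by
      ext v; simp [Finset.mem_erase, and_comm]
    rw [h1, Finset.card_erase_of_mem (by simp [P.zero_mem]), ← Fintype.card_subtype]
    congr 1
    rw [show Fintype.card {v // v ∈ P} = Fintype.card ↥P from rfl]
    exact card_eq_pow_finrank
  have hmaps : ∀ v ∈ s, Submodule.span K {v} ∈ t := by
    intro v hv
    simp only [hs, Finset.mem_filter, Finset.mem_univ, true_and] at hv
    simp only [ht, Finset.mem_filter, Finset.mem_univ, true_and]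
    exact ⟨finrank_span_singleton hv.2, (Submodule.span_singleton_le_iff_mem _ _).2 hv.1⟩
  have hfib : s.card = ∑ P ∈ t, (s.filter (fun v => Submodule.span K {v} = P)).card :=
    Finset.card_eq_sum_card_fiberwise hmaps
  have hfibcard : ∀ P ∈ t, (s.filter (fun v => Submodule.span K {v} = P)).card = q - 1 := by
    intro P hP
    simp only [ht, Finset.mem_filter, Finset.mem_univ, true_and] at hP
    have h1 : s.filter (fun v => Submodule.span K {v} = P)
        = Finset.univ.filter (fun v => v ∈ P ∧ v ≠ 0) := by
      ext v
      simp only [hs, Finset.mem_filter, Finset.mem_univ, true_and]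
      constructor
      · rintro ⟨⟨hvU, hv0⟩, hsp⟩
        exact ⟨hsp ▸ Submodule.mem_span_singleton_self v, hv0⟩
      · rintro ⟨hvP, hv0⟩
        exact ⟨⟨hP.2 hvP, hv0⟩, (eq_span_of_mem hP.1 hvP hv0).symm⟩
    rw [h1, cardP, hP.1, pow_one]
  have hscard : s.card = q ^ d - 1 := by rw [hs]; exact cardP U
  have h2 : t.card * (q - 1) = q ^ d - 1 := by
    rw [← hscard, hfib, Finset.sum_congr rfl hfibcard, Finset.sum_const, smul_eq_mul]
  have h3 : (q - 1) * gs q d = q ^ d - 1 := geom_mul q d (by omega)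
  have h4 : t.card = gs q d :=
    Nat.eq_of_mul_eq_mul_left (show 0 < q - 1 by omega) (by rw [h3, ← h2, mul_comm])
  rw [show pts U = {P : Submodule K V | finrank K ↥P = 1 ∧ P ≤ U} from rfl,
    Set.ncard_eq_toFinset_card', Set.toFinset_setOf]
  exact h4

lemma ncard_ptsOut {U H : Submodule K V} (hH : finrank K ↥H + 1 = finrank K V)
    (hU : ¬ U ≤ H) :
    (ptsOut U H).ncard
      = gs (Fintype.card K) (finrank K ↥U) - gs (Fintype.card K) (finrank K ↥U - 1) := by
  have : Finite V := Module.finite_of_finite K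
  have : Finite (Submodule K V) :=
    Finite.of_injective (fun P => (P : Set V)) (SetLike.coe_injective)
  have hsub : pts (U ⊓ H) ⊆ pts (K := K) U := fun P hP => ⟨hP.1, hP.2.trans inf_le_left⟩
  rw [ptsOut_eq_diff, Set.ncard_diff hsub (Set.toFinite _), ncard_pts, ncard_pts]
  congr 2
  have := finrank_inf_hyperplane hH hU
  omega

end Counting

section Basic2
variable {K V : Type*} [Field K] [AddCommGroup V] [Module K V] [FiniteDimensional K V]

lemma blockA_eq (σ : Submodule K V → Submodule K V) (H W : Submodule K V)
    (hσH : σ (W ⊓ H) ≤ H) :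
    blockA σ H W = pts (σ (W ⊓ H)) ∪ ptsOut W H := by
  ext P
  simp only [blockA, projPts, Set.mem_union, Set.mem_setOf_eq, pts, ptsOut]
  constructor
  · rintro ⟨h1, hsub⟩
    obtain ⟨v, hvP, hv0⟩ := exists_ne_zero_mem h1
    rcases hsub hvP with hvσ | ⟨hvW, hvH⟩
    · left
      refine ⟨h1, ?_⟩
      rw [eq_span_of_mem h1 hvP hv0]
      exact (Submodule.span_singleton_le_iff_mem _ _).2 hvσ
    · right
      refine ⟨h1, ?_, ?_⟩
      · rw [eq_span_of_mem h1 hvP hv0]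
        exact (Submodule.span_singleton_le_iff_mem _ _).2 hvW
      · intro hle
        have : v ∈ H := hle hvP
        exact hvH this
  · rintro (⟨h1, hle⟩ | ⟨h1, hleW, hnleH⟩)
    · exact ⟨h1, fun u hu => Or.inl (hle hu)⟩
    · refine ⟨h1, fun u hu => ?_⟩
      by_cases hu0 : u = 0
      · exact Or.inl (hu0 ▸ (σ (W ⊓ H)).zero_mem)
      · refine Or.inr ⟨hleW hu, fun huH => hnleH ?_⟩
        rw [eq_span_of_mem h1 hu hu0]
        exact (Submodule.span_singleton_le_iff_mem _ _).2 huH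
end Basic2

section Main
variable {K V : Type*} [Field K] [Fintype K] [AddCommGroup V] [Module K V]
  [FiniteDimensional K V]
variable {e : ℕ} {H : Submodule K V} {σ : Submodule K V → Submodule K V}

lemma rank_infH (hV : finrank K V = 2*e+1) (hH : finrank K ↥H = 2*e)
    {W : Submodule K V} (hW : W ∈ setA e H) : finrank K ↥(W ⊓ H) = e := by
  have h := finrank_inf_hyperplane (H := H) (W := W) (by omega) hW.2
  have := hW.1
  omega

lemma countAA (he : 2 ≤ e) (hV : finrank K V = 2*e+1) (hH : finrank K ↥H = 2*e)
    (hσle : ∀ W ≤ H, σ W ≤ H)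
    (hσinf : ∀ W₁ W₂ : Submodule K V, W₁ ≤ H → W₂ ≤ H → σ W₁ ⊓ σ W₂ = σ (W₁ ⊔ W₂))
    (hσrank : ∀ W ≤ H, finrank K ↥(σ W) = 2*e - finrank K ↥W)
    {W₁ W₂ : Submodule K V} (h₁ : W₁ ∈ setA e H) (h₂ : W₂ ∈ setA e H) :
    (blockA σ H W₁ ∩ blockA σ H W₂).ncard
      = gs (Fintype.card K) (finrank K ↥(W₁ ⊓ W₂)) := by
  have : Finite V := Module.finite_of_finite K
  have : Finite (Submodule K V) :=
    Finite.of_injective (fun P => (P : Set V)) (SetLike.coe_injective)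
  have hq2 : 2 ≤ Fintype.card K := Fintype.one_lt_card
  have hσ₁ : σ (W₁ ⊓ H) ≤ H := hσle _ inf_le_right
  have hσ₂ : σ (W₂ ⊓ H) ≤ H := hσle _ inf_le_right
  have e₁ : finrank K ↥(W₁ ⊓ H) = e := rank_infH hV hH h₁
  have e₂ : finrank K ↥(W₂ ⊓ H) = e := rank_infH hV hH h₂
  rw [blockA_eq σ H W₁ hσ₁, blockA_eq σ H W₂ hσ₂]
  have main : (pts (σ (W₁ ⊓ H)) ∪ ptsOut W₁ H) ∩ (pts (σ (W₂ ⊓ H)) ∪ ptsOut W₂ H)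
      = pts (σ (W₁ ⊓ H) ⊓ σ (W₂ ⊓ H)) ∪ ptsOut (W₁ ⊓ W₂) H := by
    rw [← pts_inter, ← ptsOut_inter]
    ext P
    simp only [Set.mem_union, Set.mem_inter_iff]
    constructor
    · rintro ⟨h1 | h1, h2 | h2⟩
      · exact Or.inl ⟨h1, h2⟩
      · exact (h2.2.2 (h1.2.trans hσ₁)).elim
      · exact (h1.2.2 (h2.2.trans hσ₂)).elim
      · exact Or.inr ⟨h1, h2⟩
    · rintro (⟨h1, h2⟩ | ⟨h1, h2⟩)
      · exact ⟨Or.inl h1, Or.inl h2⟩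
      · exact ⟨Or.inr h1, Or.inr h2⟩
  rw [main, Set.ncard_union_eq (pts_disjoint_ptsOut (inf_le_left.trans hσ₁))
    (Set.toFinite _) (Set.toFinite _)]
  rw [hσinf _ _ inf_le_right inf_le_right, ncard_pts]
  have hsupH : (W₁ ⊓ H) ⊔ (W₂ ⊓ H) ≤ H := sup_le inf_le_right inf_le_right
  have hranks : finrank K ↥((W₁ ⊓ H) ⊔ (W₂ ⊓ H)) + finrank K ↥((W₁ ⊓ H) ⊓ (W₂ ⊓ H))
      = finrank K ↥(W₁ ⊓ H) + finrank K ↥(W₂ ⊓ H) :=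
    Submodule.finrank_sup_add_finrank_inf_eq _ _
  have hinfeq : (W₁ ⊓ H) ⊓ (W₂ ⊓ H) = (W₁ ⊓ W₂) ⊓ H := by
    rw [inf_inf_inf_comm, inf_idem]
  rw [hinfeq, e₁, e₂] at hranks
  rw [hσrank _ hsupH]
  set m := finrank K ↥(W₁ ⊓ W₂) with hm
  by_cases hcase : W₁ ⊓ W₂ ≤ H
  · have hout : ptsOut (W₁ ⊓ W₂) H = (∅ : Set (Submodule K V)) := by
      ext P
      simp only [ptsOut, Set.mem_setOf_eq, Set.mem_empty_iff_false, iff_false]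
      rintro ⟨_, hle, hn⟩
      exact hn (hle.trans hcase)
    have hinfH : finrank K ↥((W₁ ⊓ W₂) ⊓ H) = m := by
      rw [inf_eq_left.2 hcase]
    rw [hout, Set.ncard_empty, add_zero]
    have h2e : 2*e - finrank K ↥((W₁ ⊓ H) ⊔ (W₂ ⊓ H)) = m := by omega
    rw [h2e]
  · have hinfrk : finrank K ↥((W₁ ⊓ W₂) ⊓ H) + 1 = m :=
      finrank_inf_hyperplane (by omega) hcase
    rw [ncard_ptsOut (by omega) hcase, ← hm]
    have h2e : 2*e - finrank K ↥((W₁ ⊓ H) ⊔ (W₂ ⊓ H)) = m - 1 := by omega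
    rw [h2e]
    have hmono : gs (Fintype.card K) (m-1) ≤ gs (Fintype.card K) m :=
      (gs_strictMono hq2).monotone (by omega)
    have hsucc := gs_succ (Fintype.card K) (m-1)
    have hm1 : m - 1 + 1 = m := by omega
    rw [hm1] at hsucc
    omega

lemma countAB (he : 2 ≤ e) (hV : finrank K V = 2*e+1) (hH : finrank K ↥H = 2*e)
    (hσle : ∀ W ≤ H, σ W ≤ H)
    (hσinf : ∀ W₁ W₂ : Submodule K V, W₁ ≤ H → W₂ ≤ H → σ W₁ ⊓ σ W₂ = σ (W₁ ⊔ W₂))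
    (hσrank : ∀ W ≤ H, finrank K ↥(σ W) = 2*e - finrank K ↥W)
    {W₁ W₂ : Submodule K V} (h₁ : W₁ ∈ setA e H) (h₂ : W₂ ∈ setB e H) :
    (blockA σ H W₁ ∩ blockB σ W₂).ncard
        = gs (Fintype.card K) (2*e - finrank K ↥((W₁ ⊓ H) ⊔ W₂))
      ∧ (finrank K ↥((W₁ ⊓ H) ⊔ W₂) = e ↔ W₂ ≤ W₁)
      ∧ e ≤ finrank K ↥((W₁ ⊓ H) ⊔ W₂) ∧ finrank K ↥((W₁ ⊓ H) ⊔ W₂) ≤ 2*e := by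
  have : Finite V := Module.finite_of_finite K
  have : Finite (Submodule K V) :=
    Finite.of_injective (fun P => (P : Set V)) (SetLike.coe_injective)
  have hσ₁ : σ (W₁ ⊓ H) ≤ H := hσle _ inf_le_right
  have hσ₂ : σ W₂ ≤ H := hσle _ h₂.2
  have e₁ : finrank K ↥(W₁ ⊓ H) = e := rank_infH hV hH h₁
  have hsupH : (W₁ ⊓ H) ⊔ W₂ ≤ H := sup_le inf_le_right h₂.2
  have hble : e ≤ finrank K ↥((W₁ ⊓ H) ⊔ W₂) := by
    have := Submodule.finrank_mono (le_sup_left : W₁ ⊓ H ≤ (W₁ ⊓ H) ⊔ W₂)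
    omega
  have hbge : finrank K ↥((W₁ ⊓ H) ⊔ W₂) ≤ 2*e := by
    have := Submodule.finrank_mono hsupH
    omega
  refine ⟨?_, ?_, hble, hbge⟩
  · have main : blockA σ H W₁ ∩ blockB σ W₂ = pts (σ (W₁ ⊓ H) ⊓ σ W₂) := by
      rw [blockA_eq σ H W₁ hσ₁, blockB, projPts_submodule, ← pts_inter,
        Set.union_inter_distrib_right]
      ext P
      simp only [Set.mem_union, Set.mem_inter_iff]
      constructor
      · rintro (⟨h1, h2⟩ | ⟨h1, h2⟩)
        · exact ⟨h1, h2⟩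
        · exact (h1.2.2 (h2.2.trans hσ₂)).elim
      · exact fun h => Or.inl h
    rw [main, hσinf _ _ inf_le_right h₂.2, ncard_pts, hσrank _ hsupH]
  · constructor
    · intro hfr
      have : W₁ ⊓ H = (W₁ ⊓ H) ⊔ W₂ :=
        eq_of_le_of_finrank_eq le_sup_left (by omega)
      have hW2 : W₂ ≤ W₁ ⊓ H := this ▸ le_sup_right
      exact hW2.trans inf_le_left
    · intro hle
      have : (W₁ ⊓ H) ⊔ W₂ = W₁ ⊓ H := sup_eq_left.2 (le_inf hle h₂.2)
      rw [this, e₁]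

lemma countBB (he : 2 ≤ e) (hV : finrank K V = 2*e+1) (hH : finrank K ↥H = 2*e)
    (hσle : ∀ W ≤ H, σ W ≤ H)
    (hσinf : ∀ W₁ W₂ : Submodule K V, W₁ ≤ H → W₂ ≤ H → σ W₁ ⊓ σ W₂ = σ (W₁ ⊔ W₂))
    (hσrank : ∀ W ≤ H, finrank K ↥(σ W) = 2*e - finrank K ↥W)
    {W₁ W₂ : Submodule K V} (h₁ : W₁ ∈ setB e H) (h₂ : W₂ ∈ setB e H) :
    (blockB σ W₁ ∩ blockB σ W₂).ncard
      = gs (Fintype.card K) (2 + finrank K ↥(W₁ ⊓ W₂)) := by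
  have : Finite V := Module.finite_of_finite K
  have : Finite (Submodule K V) :=
    Finite.of_injective (fun P => (P : Set V)) (SetLike.coe_injective)
  have hsupH : W₁ ⊔ W₂ ≤ H := sup_le h₁.2 h₂.2
  rw [blockB, blockB, projPts_submodule, projPts_submodule, pts_inter,
    hσinf _ _ h₁.2 h₂.2, ncard_pts, hσrank _ hsupH]
  have hranks : finrank K ↥(W₁ ⊔ W₂) + finrank K ↥(W₁ ⊓ W₂)
      = finrank K ↥W₁ + finrank K ↥W₂ := Submodule.finrank_sup_add_finrank_inf_eq _ _
  have hb1 : finrank K ↥W₁ = e - 1 := h₁.1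
  have hb2 : finrank K ↥W₂ = e - 1 := h₂.1
  have hle : finrank K ↥(W₁ ⊓ W₂) ≤ e - 1 := by
    have := Submodule.finrank_mono (inf_le_left : W₁ ⊓ W₂ ≤ W₁)
    omega
  have h2e : 2*e - finrank K ↥(W₁ ⊔ W₂) = 2 + finrank K ↥(W₁ ⊓ W₂) := by omega
  rw [h2e]

end Main
end JTaux

open JTaux in
/-- The map `f` is a bijection from `𝒜 ∪ ℬ` onto the block set `𝒜' ∪ ℬ'` of
the Jungnickel–Tonchev design; two vertices are adjacent in the twisted Grassmann graph
`J̃_q(2e+1, e)` iff the corresponding blocks intersect in `(q^e - 1)/(q - 1)` points; and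
consequently `J̃_q(2e+1, e)` is isomorphic to the block graph of the design. -/
theorem stmt0 (q e : ℕ) (hq : ∃ p n : ℕ, p.Prime ∧ 0 < n ∧ q = p ^ n) (he : 2 ≤ e)
    (K V : Type*) [Field K] [Fintype K] (hK : Fintype.card K = q)
    [AddCommGroup V] [Module K V] [FiniteDimensional K V]
    (hV : Module.finrank K V = 2 * e + 1)
    (H : Submodule K V) (hH : Module.finrank K ↥H = 2 * e)
    (σ : Submodule K V → Submodule K V)
    (hσle : ∀ W ≤ H, σ W ≤ H)
    (hσinv : ∀ W ≤ H, σ (σ W) = W)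
    (hσanti : ∀ W₁ W₂ : Submodule K V, W₁ ≤ H → W₂ ≤ H → W₁ ≤ W₂ → σ W₂ ≤ σ W₁)
    (hσinf : ∀ W₁ W₂ : Submodule K V, W₁ ≤ H → W₂ ≤ H → σ W₁ ⊓ σ W₂ = σ (W₁ ⊔ W₂))
    (hσrank : ∀ W ≤ H, Module.finrank K ↥(σ W) = 2 * e - Module.finrank K ↥W)
    :
    Set.BijOn (fJT σ e H) (setA e H ∪ setB e H) (blocksJT e σ H) ∧
    (∀ W₁ W₂ : {W : Submodule K V // W ∈ setA e H ∪ setB e H},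
      (twistedGraph e H).Adj W₁ W₂ ↔
        (fJT σ e H W₁.1 ∩ fJT σ e H W₂.1).ncard = (q ^ e - 1) / (q - 1)) ∧
    Nonempty (twistedGraph e H ≃g blockGraphJT q e σ H) := by
  have hq2 : 2 ≤ q := hK ▸ Fintype.one_lt_card
  have hnotA : ∀ W ∈ setB e H, W ∉ setA e H := by
    intro W hW hWA
    have h1 : finrank K ↥W = e - 1 := hW.1
    have h2 : finrank K ↥W = e + 1 := hWA.1
    omega
  have hfA : ∀ W ∈ setA e H, fJT σ e H W = blockA σ H W := fun W hW => if_pos hW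
  have hfB : ∀ W ∈ setB e H, fJT σ e H W = blockB σ W := fun W hW => if_neg (hnotA W hW)
  -- the σ-image of a `setB` element
  have hsB : ∀ W ∈ setB e H, finrank K ↥(σ W) = e + 1 := by
    intro W hW
    rw [hσrank _ hW.2, hW.1]
    omega
  -- pull apart blockA points below and not below H
  have hApartition : ∀ W ∈ setA e H,
      {P ∈ blockA σ H W | ¬ P ≤ H} = ptsOut W H := by
    intro W hW
    rw [blockA_eq σ H W (hσle _ inf_le_right)]
    ext P
    simp only [Set.mem_setOf_eq, Set.mem_union]
    constructor
    · rintro ⟨hP | hP, hn⟩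
      · exact absurd (hP.2.trans (hσle _ inf_le_right)) hn
      · exact hP
    · exact fun hP => ⟨Or.inr hP, hP.2.2⟩
  -- 1. BijOn
  have hbij : Set.BijOn (fJT σ e H) (setA e H ∪ setB e H) (blocksJT e σ H) := by
    refine ⟨?_, ?_, ?_⟩
    · rintro W (hW | hW)
      · rw [hfA W hW]; exact Or.inl ⟨W, hW, rfl⟩
      · rw [hfB W hW]; exact Or.inr ⟨σ W, hsB W hW, hσle _ hW.2, rfl⟩
    · rintro W₁ h₁ W₂ h₂ heq
      rcases h₁ with h₁ | h₁ <;> rcases h₂ with h₂ | h₂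
      · rw [hfA W₁ h₁, hfA W₂ h₂] at heq
        have := congrArg (fun S => sSup {P ∈ S | ¬ P ≤ H}) heq
        simp only [hApartition W₁ h₁, hApartition W₂ h₂] at this
        rw [sSup_ptsOut h₁.2, sSup_ptsOut h₂.2] at this
        exact this
      · exfalso
        rw [hfA W₁ h₁, hfB W₂ h₂, blockB, projPts_submodule] at heq
        obtain ⟨v, hvW, hvH⟩ := SetLike.not_le_iff_exists.1 h₁.2
        have hmem : Submodule.span K {v} ∈ blockA σ H W₁ := by
          rw [blockA_eq σ H W₁ (hσle _ inf_le_right)]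
          exact Or.inr (span_mem_ptsOut hvW hvH)
        rw [heq] at hmem
        exact hvH ((hmem.2.trans (hσle _ h₂.2)) (Submodule.mem_span_singleton_self v))
      · exfalso
        rw [hfB W₁ h₁, hfA W₂ h₂, blockB, projPts_submodule] at heq
        obtain ⟨v, hvW, hvH⟩ := SetLike.not_le_iff_exists.1 h₂.2
        have hmem : Submodule.span K {v} ∈ blockA σ H W₂ := by
          rw [blockA_eq σ H W₂ (hσle _ inf_le_right)]
          exact Or.inr (span_mem_ptsOut hvW hvH)
        rw [← heq] at hmem
        exact hvH ((hmem.2.trans (hσle _ h₁.2)) (Submodule.mem_span_singleton_self v))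
      · rw [hfB W₁ h₁, hfB W₂ h₂, blockB, blockB, projPts_submodule, projPts_submodule] at heq
        have := congrArg sSup heq
        rw [sSup_pts, sSup_pts] at this
        rw [← hσinv W₁ h₁.2, ← hσinv W₂ h₂.2, this]
    · rintro B (⟨W, hW, rfl⟩ | ⟨W', h1, h2, rfl⟩)
      · exact ⟨W, Or.inl hW, hfA W hW⟩
      · have hmem : σ W' ∈ setB e H := by
          refine ⟨?_, hσle _ h2⟩
          rw [hσrank _ h2, h1]
          omega
        refine ⟨σ W', Or.inr hmem, ?_⟩
        rw [hfB _ hmem, blockB, hσinv _ h2]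
  have hgsinj : Function.Injective (gs (Fintype.card K)) :=
    (gs_strictMono (hK ▸ hq2)).injective
  have hkey : ∀ W₁ ∈ setA e H ∪ setB e H, ∀ W₂ ∈ setA e H ∪ setB e H,
      ((W₁ ≠ W₂ ∧ (twistedAdj e H W₁ W₂ ∨ twistedAdj e H W₂ W₁)) ↔
        (fJT σ e H W₁ ∩ fJT σ e H W₂).ncard = gs (Fintype.card K) e) := by
    rintro W₁ (h₁ | h₁) W₂ (h₂ | h₂)
    · -- A A
      rw [hfA W₁ h₁, hfA W₂ h₂, countAA he hV hH hσle hσinf hσrank h₁ h₂]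
      constructor
      · rintro ⟨hne, hadj | hadj⟩
        · rcases hadj with ⟨_, _, h⟩ | ⟨_, hb, _⟩ | ⟨hb, _, _⟩ | ⟨hb, _, _⟩
          · rw [h]
          · exact absurd h₂ (hnotA _ hb)
          · exact absurd h₁ (hnotA _ hb)
          · exact absurd h₁ (hnotA _ hb)
        · rcases hadj with ⟨_, _, h⟩ | ⟨_, hb, _⟩ | ⟨hb, _, _⟩ | ⟨hb, _, _⟩
          · rw [inf_comm] at h; rw [h]
          · exact absurd h₁ (hnotA _ hb)
          · exact absurd h₂ (hnotA _ hb)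
          · exact absurd h₂ (hnotA _ hb)
      · intro hcard
        have hfr : finrank K ↥(W₁ ⊓ W₂) = e := hgsinj hcard
        have hne : W₁ ≠ W₂ := by
          rintro rfl
          rw [inf_idem] at hfr
          have := h₁.1
          omega
        exact ⟨hne, Or.inl (Or.inl ⟨h₁, h₂, hfr⟩)⟩
    · -- A B
      rw [hfA W₁ h₁, hfB W₂ h₂]
      obtain ⟨hc, hiff, hge, hle2e⟩ := countAB he hV hH hσle hσinf hσrank h₁ h₂
      rw [hc]
      have hne : W₁ ≠ W₂ := by
        intro h
        have h1 : finrank K ↥W₁ = e + 1 := h₁.1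
        have h2 : finrank K ↥W₂ = e - 1 := h₂.1
        rw [h] at h1
        omega
      constructor
      · rintro ⟨_, hadj | hadj⟩
        · rcases hadj with ⟨_, hb, _⟩ | ⟨_, _, h⟩ | ⟨hb, _, _⟩ | ⟨hb, _, _⟩
          · exact absurd hb (hnotA _ h₂)
          · have : finrank K ↥((W₁ ⊓ H) ⊔ W₂) = e := hiff.2 h
            rw [this]
            congr 1
            omega
          · exact absurd h₁ (hnotA _ hb)
          · exact absurd h₁ (hnotA _ hb)
        · rcases hadj with ⟨hb, _, _⟩ | ⟨hb, _, _⟩ | ⟨_, _, h⟩ | ⟨_, hb, _⟩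
          · exact absurd hb (hnotA _ h₂)
          · exact absurd hb (hnotA _ h₂)
          · have : finrank K ↥((W₁ ⊓ H) ⊔ W₂) = e := hiff.2 h
            rw [this]
            congr 1
            omega
          · exact absurd h₁ (hnotA _ hb)
      · intro hcard
        have : 2*e - finrank K ↥((W₁ ⊓ H) ⊔ W₂) = e := hgsinj hcard
        have hfr : finrank K ↥((W₁ ⊓ H) ⊔ W₂) = e := by omega
        exact ⟨hne, Or.inl (Or.inr (Or.inl ⟨h₁, h₂, hiff.1 hfr⟩))⟩
    · -- B A
      rw [hfB W₁ h₁, hfA W₂ h₂, Set.inter_comm]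
      obtain ⟨hc, hiff, hge, hle2e⟩ := countAB he hV hH hσle hσinf hσrank h₂ h₁
      rw [hc]
      have hne : W₁ ≠ W₂ := by
        intro h
        have h1 : finrank K ↥W₁ = e - 1 := h₁.1
        have h2 : finrank K ↥W₂ = e + 1 := h₂.1
        rw [h] at h1
        omega
      constructor
      · rintro ⟨_, hadj | hadj⟩
        · rcases hadj with ⟨hb, _, _⟩ | ⟨hb, _, _⟩ | ⟨_, _, h⟩ | ⟨_, hb, _⟩
          · exact absurd hb (hnotA _ h₁)
          · exact absurd hb (hnotA _ h₁)
          · have : finrank K ↥((W₂ ⊓ H) ⊔ W₁) = e := hiff.2 h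
            rw [this]
            congr 1
            omega
          · exact absurd h₂ (hnotA _ hb)
        · rcases hadj with ⟨_, hb, _⟩ | ⟨_, _, h⟩ | ⟨hb, _, _⟩ | ⟨hb, _, _⟩
          · exact absurd hb (hnotA _ h₁)
          · have : finrank K ↥((W₂ ⊓ H) ⊔ W₁) = e := hiff.2 h
            rw [this]
            congr 1
            omega
          · exact absurd h₂ (hnotA _ hb)
          · exact absurd h₂ (hnotA _ hb)
      · intro hcard
        have : 2*e - finrank K ↥((W₂ ⊓ H) ⊔ W₁) = e := hgsinj hcard
        have hfr : finrank K ↥((W₂ ⊓ H) ⊔ W₁) = e := by omega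
        exact ⟨hne, Or.inl (Or.inr (Or.inr (Or.inl ⟨h₁, h₂, hiff.1 hfr⟩)))⟩
    · -- B B
      rw [hfB W₁ h₁, hfB W₂ h₂, countBB he hV hH hσle hσinf hσrank h₁ h₂]
      have hfrle : finrank K ↥(W₁ ⊓ W₂) ≤ e - 1 := by
        have h1 := Submodule.finrank_mono (inf_le_left : W₁ ⊓ W₂ ≤ W₁)
        have h2 : finrank K ↥W₁ = e - 1 := h₁.1
        omega
      constructor
      · rintro ⟨hne, hadj | hadj⟩
        · rcases hadj with ⟨hb, _, _⟩ | ⟨hb, _, _⟩ | ⟨_, hb, _⟩ | ⟨_, _, h⟩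
          · exact absurd hb (hnotA _ h₁)
          · exact absurd hb (hnotA _ h₁)
          · exact absurd hb (hnotA _ h₂)
          · rw [h]
            congr 1
            omega
        · rcases hadj with ⟨hb, _, _⟩ | ⟨hb, _, _⟩ | ⟨_, hb, _⟩ | ⟨_, _, h⟩
          · exact absurd hb (hnotA _ h₂)
          · exact absurd hb (hnotA _ h₂)
          · exact absurd hb (hnotA _ h₁)
          · rw [inf_comm] at h
            rw [h]
            congr 1
            omega
      · intro hcard
        have h2f : 2 + finrank K ↥(W₁ ⊓ W₂) = e := hgsinj hcard
        have hfr : finrank K ↥(W₁ ⊓ W₂) = e - 2 := by omega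
        have hne : W₁ ≠ W₂ := by
          rintro rfl
          rw [inf_idem] at hfr
          have := h₁.1
          omega
        exact ⟨hne, Or.inl (Or.inr (Or.inr (Or.inr ⟨h₁, h₂, hfr⟩)))⟩
  have hpart2 : ∀ W₁ W₂ : {W : Submodule K V // W ∈ setA e H ∪ setB e H},
      (twistedGraph e H).Adj W₁ W₂ ↔
        (fJT σ e H W₁.1 ∩ fJT σ e H W₂.1).ncard = (q ^ e - 1) / (q - 1) := by
    intro W₁ W₂
    rw [show (q ^ e - 1) / (q - 1) = gs q e from geom_div hq2, ← hK]
    rw [twistedGraph, SimpleGraph.fromRel_adj]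
    rw [← hkey W₁.1 W₁.2 W₂.1 W₂.2]
    constructor
    · rintro ⟨hne, h⟩
      exact ⟨fun hh => hne (Subtype.ext hh), h⟩
    · rintro ⟨hne, h⟩
      exact ⟨fun hh => hne (congrArg Subtype.val hh), h⟩
  refine ⟨hbij, hpart2, ?_⟩
  refine ⟨⟨Set.BijOn.equiv (fJT σ e H) hbij, ?_⟩⟩
  intro W₁ W₂
  rw [blockGraphJT, SimpleGraph.fromRel_adj]
  have happ₁ : ((Set.BijOn.equiv (fJT σ e H) hbij) W₁).1 = fJT σ e H W₁.1 := rfl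
  have happ₂ : ((Set.BijOn.equiv (fJT σ e H) hbij) W₂).1 = fJT σ e H W₂.1 := rfl
  rw [hpart2 W₁ W₂, happ₁, happ₂, Set.inter_comm (fJT σ e H W₂.1)]
  simp only [or_self]
  constructor
  · rintro ⟨_, h⟩
    exact h
  · intro h
    refine ⟨?_, h⟩
    -- injectivity gives distinctness
    have hadj : (twistedGraph e H).Adj W₁ W₂ := (hpart2 W₁ W₂).2 h
    have hne : W₁ ≠ W₂ := hadj.ne
    intro hcon
    apply hne
    have : fJT σ e H W₁.1 = fJT σ e H W₂.1 := by
      rw [← happ₁, ← happ₂, hcon]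
    exact Subtype.ext (hbij.injOn W₁.2 W₂.2 this)
end

section
/- Let W₁, W₂ ∈ 𝒜, i.e., W₁, W₂ are (e+1)-dimensional subspaces of V not contained in H, and let f(Wᵢ) = [σ(Wᵢ∩H) ∪ (Wᵢ∖H)]. Then |f(W₁) ∩ f(W₂)| = (q^{dim(W₁∩W₂)} − 1)/(q − 1). -/
section AuxJT

open Module

variable {K V : Type*} [Field K] [Fintype K] [AddCommGroup V] [Module K V]
  [FiniteDimensional K V]

private lemma span_singleton_eq_of_mem {P : Submodule K V} (hP : Module.finrank K P = 1)
    {v : V} (hv : v ≠ 0) (hvP : v ∈ P) : Submodule.span K {v} = P :=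
  Submodule.eq_of_le_of_finrank_eq ((Submodule.span_singleton_le_iff_mem _ _).2 hvP)
    (by rw [finrank_span_singleton hv, hP])

private lemma pt_exists_gen {P : Submodule K V} (hP : Module.finrank K P = 1) :
    ∃ v : V, v ≠ 0 ∧ v ∈ P ∧ Submodule.span K {v} = P := by
  have hPbot : P ≠ ⊥ := by
    intro h
    rw [h, finrank_bot] at hP
    omega
  obtain ⟨v, hvP, hv⟩ := (Submodule.ne_bot_iff P).1 hPbot
  exact ⟨v, hv, hvP, span_singleton_eq_of_mem hP hv hvP⟩

/-- Characterization of membership in `blockA`. -/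
private lemma mem_blockA_iff {σ : Submodule K V → Submodule K V} {H W : Submodule K V}
    (hσH : σ (W ⊓ H) ≤ H) (P : Submodule K V) :
    P ∈ blockA σ H W ↔ Module.finrank K P = 1 ∧
      (P ≤ σ (W ⊓ H) ∨ (P ≤ W ∧ ¬ P ≤ H)) := by
  constructor
  · rintro ⟨h1, hsub⟩
    refine ⟨h1, ?_⟩
    obtain ⟨v, hv, hvP, hspan⟩ := pt_exists_gen h1
    rcases hsub hvP with hA | hB
    · left
      rw [← hspan]
      exact (Submodule.span_singleton_le_iff_mem _ _).2 hA
    · right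
      refine ⟨?_, fun hPH => hB.2 (hPH hvP)⟩
      intro x hxP
      rcases hsub hxP with hA' | hB'
      · have hxH : x ∈ H := hσH hA'
        rw [← hspan] at hxP
        obtain ⟨c, rfl⟩ := Submodule.mem_span_singleton.1 hxP
        rcases eq_or_ne c 0 with rfl | hc
        · simpa using W.zero_mem
        · exfalso
          have hvH := H.smul_mem c⁻¹ hxH
          rw [smul_smul, inv_mul_cancel₀ hc, one_smul] at hvH
          exact hB.2 hvH
      · exact hB'.1
  · rintro ⟨h1, hA | ⟨hPW, hPH⟩⟩
    · exact ⟨h1, fun x hx => Or.inl (hA hx)⟩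
    · refine ⟨h1, fun x hx => ?_⟩
      rcases eq_or_ne x 0 with rfl | hx0
      · exact Or.inl (σ (W ⊓ H)).zero_mem
      · refine Or.inr ⟨hPW hx, fun hxH => ?_⟩
        exact hPH ((span_singleton_eq_of_mem h1 hx0 hx) ▸
          (Submodule.span_singleton_le_iff_mem _ _).2 hxH)

/-- The number of projective points in a subspace `M`. -/
private lemma card_pts (M : Submodule K V) :
    {P : Submodule K V | Module.finrank K P = 1 ∧ P ≤ M}.ncard =
      (Fintype.card K ^ Module.finrank K M - 1) / (Fintype.card K - 1) := by
  classical
  have : Finite V := Module.finite_of_finite K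
  have : Fintype V := Fintype.ofFinite V
  have hq2 : 2 ≤ Fintype.card K := Fintype.one_lt_card
  have hScard : ((M : Set V) \ {0}).toFinset.card
      = Fintype.card K ^ Module.finrank K M - 1 := by
    rw [Set.toFinset_diff, Finset.card_sdiff_of_subset (by simp)]
    simp only [Set.toFinset_card, Set.toFinset_singleton, Finset.card_singleton]
    congr 1
    rw [← card_eq_pow_finrank (K := K) (V := ↥M)]
    exact Fintype.card_congr (Equiv.refl _) |>.trans (Fintype.card_congr (Equiv.setCongr rfl))
  have hfib : ∀ v ∈ ((M : Set V) \ {0}).toFinset,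
      Submodule.span K {v} ∈ {P : Submodule K V | Module.finrank K P = 1 ∧ P ≤ M}.toFinset := by
    intro v hv
    rw [Set.mem_toFinset] at hv ⊢
    exact ⟨finrank_span_singleton hv.2, (Submodule.span_singleton_le_iff_mem _ _).2 hv.1⟩
  have hST : ((M : Set V) \ {0}).toFinset.card
      = {P : Submodule K V | Module.finrank K P = 1 ∧ P ≤ M}.toFinset.card
        * (Fintype.card K - 1) := by
    rw [Finset.card_eq_sum_card_fiberwise hfib]
    rw [Finset.sum_congr rfl (g := fun _ => Fintype.card K - 1), Finset.sum_const, smul_eq_mul]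
    intro P hP
    rw [Set.mem_toFinset] at hP
    have hfilter : ((M : Set V) \ {0}).toFinset.filter (fun v => Submodule.span K {v} = P)
        = ((P : Set V) \ {0}).toFinset := by
      ext v
      simp only [Finset.mem_filter, Set.mem_toFinset, Set.mem_diff, Set.mem_singleton_iff]
      constructor
      · rintro ⟨⟨hvM, hv0⟩, hsp⟩
        exact ⟨hsp ▸ Submodule.mem_span_singleton_self v, hv0⟩
      · rintro ⟨hvP, hv0⟩
        exact ⟨⟨hP.2 hvP, hv0⟩, span_singleton_eq_of_mem hP.1 hv0 hvP⟩
    rw [hfilter, Set.toFinset_diff, Finset.card_sdiff_of_subset (by simp [P.zero_mem])]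
    simp only [Set.toFinset_card, Set.toFinset_singleton, Finset.card_singleton]
    congr 1
    have : Fintype.card ↥(P : Set V) = Fintype.card K ^ Module.finrank K ↥P := by
      rw [← card_eq_pow_finrank (K := K) (V := ↥P)]
      rfl
    rw [this, hP.1, pow_one]
  rw [Set.ncard_eq_toFinset_card' {P : Submodule K V | Module.finrank K P = 1 ∧ P ≤ M}]
  have heq : Fintype.card K ^ Module.finrank K M - 1
      = {P : Submodule K V | Module.finrank K P = 1 ∧ P ≤ M}.toFinset.card
        * (Fintype.card K - 1) := by
    rw [← hScard, hST]
  rw [← Nat.mul_div_cancel ({P : Submodule K V | Module.finrank K P = 1 ∧ P ≤ M}.toFinset.card)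
    (show 0 < Fintype.card K - 1 by omega), ← heq]

end AuxJT

/-- For `W₁, W₂ ∈ 𝒜`, the blocks `f(Wᵢ) = [σ(Wᵢ ∩ H) ∪ (Wᵢ \ H)]` satisfy
`|f(W₁) ∩ f(W₂)| = (q^{dim (W₁ ∩ W₂)} - 1)/(q - 1)`. -/
theorem stmt4 (q e : ℕ) (hq : ∃ p n : ℕ, p.Prime ∧ 0 < n ∧ q = p ^ n) (he : 1 ≤ e)
    (K V : Type*) [Field K] [Fintype K] (hK : Fintype.card K = q)
    [AddCommGroup V] [Module K V] [FiniteDimensional K V]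
    (hV : Module.finrank K V = 2 * e + 1)
    (H : Submodule K V) (hH : Module.finrank K ↥H = 2 * e)
    (σ : Submodule K V → Submodule K V)
    (hσle : ∀ W ≤ H, σ W ≤ H)
    (hσinv : ∀ W ≤ H, σ (σ W) = W)
    (hσanti : ∀ W₁ W₂ : Submodule K V, W₁ ≤ H → W₂ ≤ H → W₁ ≤ W₂ → σ W₂ ≤ σ W₁)
    (hσinf : ∀ W₁ W₂ : Submodule K V, W₁ ≤ H → W₂ ≤ H → σ W₁ ⊓ σ W₂ = σ (W₁ ⊔ W₂))
    (hσrank : ∀ W ≤ H, Module.finrank K ↥(σ W) = 2 * e - Module.finrank K ↥W)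
    (W₁ W₂ : Submodule K V) (hW₁ : W₁ ∈ setA e H) (hW₂ : W₂ ∈ setA e H) :
    (blockA σ H W₁ ∩ blockA σ H W₂).ncard =
      (q ^ Module.finrank K ↥(W₁ ⊓ W₂) - 1) / (q - 1) := by
  classical
  subst hK
  obtain ⟨hr₁, hn₁⟩ := hW₁
  obtain ⟨hr₂, hn₂⟩ := hW₂
  have hFinV : Finite V := Module.finite_of_finite K
  have hFinSub : Finite (Submodule K V) :=
    Finite.of_injective (fun W : Submodule K V => (W : Set V)) SetLike.coe_injective
  have hq2 : 2 ≤ Fintype.card K := Fintype.one_lt_card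
  -- any subspace not in H spans V together with H
  have hsup : ∀ W : Submodule K V, ¬ W ≤ H → W ⊔ H = ⊤ := by
    intro W hW
    apply Submodule.eq_top_of_finrank_eq
    have hlt : H < W ⊔ H :=
      lt_of_le_of_ne le_sup_right (fun h => hW (le_trans le_sup_left h.ge))
    have h1 := Submodule.finrank_lt_finrank_of_lt hlt
    have h2 := Submodule.finrank_le (W ⊔ H)
    omega
  have hU₁le : W₁ ⊓ H ≤ H := inf_le_right
  have hU₂le : W₂ ⊓ H ≤ H := inf_le_right
  have hUle : (W₁ ⊓ H) ⊔ (W₂ ⊓ H) ≤ H := sup_le hU₁le hU₂le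
  have hble₁ : σ (W₁ ⊓ H) ≤ H := hσle _ hU₁le
  have hble₂ : σ (W₂ ⊓ H) ≤ H := hσle _ hU₂le
  -- ranks of the Uᵢ = Wᵢ ⊓ H
  have hrankU : ∀ W : Submodule K V, Module.finrank K ↥W = e + 1 → ¬ W ≤ H →
      Module.finrank K ↥(W ⊓ H) = e := by
    intro W hr hn
    have h1 := Submodule.finrank_sup_add_finrank_inf_eq W H
    rw [hsup W hn, finrank_top] at h1
    omega
  have hrU₁ : Module.finrank K ↥(W₁ ⊓ H) = e := hrankU W₁ hr₁ hn₁
  have hrU₂ : Module.finrank K ↥(W₂ ⊓ H) = e := hrankU W₂ hr₂ hn₂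
  have hUU : (W₁ ⊓ H) ⊓ (W₂ ⊓ H) = (W₁ ⊓ W₂) ⊓ H := by
    rw [inf_inf_inf_comm, inf_idem]
  have hsupUrank := Submodule.finrank_sup_add_finrank_inf_eq (W₁ ⊓ H) (W₂ ⊓ H)
  rw [hUU, hrU₁, hrU₂] at hsupUrank
  -- decomposition of the block intersection
  have hdecomp : blockA σ H W₁ ∩ blockA σ H W₂ =
      {P : Submodule K V | Module.finrank K P = 1 ∧ P ≤ σ ((W₁ ⊓ H) ⊔ (W₂ ⊓ H))} ∪
      {P : Submodule K V | Module.finrank K P = 1 ∧ P ≤ W₁ ⊓ W₂ ∧ ¬ P ≤ H} := by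
    ext P
    simp only [Set.mem_inter_iff, mem_blockA_iff hble₁ P, mem_blockA_iff hble₂ P,
      Set.mem_union, Set.mem_setOf_eq]
    constructor
    · rintro ⟨⟨h1, hA1 | hB1⟩, ⟨_, hA2 | hB2⟩⟩
      · left
        refine ⟨h1, ?_⟩
        rw [← hσinf _ _ hU₁le hU₂le]
        exact le_inf hA1 hA2
      · exact absurd (hA1.trans hble₁) hB2.2
      · exact absurd (hA2.trans hble₂) hB1.2
      · exact Or.inr ⟨h1, le_inf hB1.1 hB2.1, hB1.2⟩
    · rintro (⟨h1, hA⟩ | ⟨h1, hPD, hPH⟩)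
      · exact ⟨⟨h1, Or.inl (hA.trans (hσanti _ _ hU₁le hUle le_sup_left))⟩,
          ⟨h1, Or.inl (hA.trans (hσanti _ _ hU₂le hUle le_sup_right))⟩⟩
      · exact ⟨⟨h1, Or.inr ⟨hPD.trans inf_le_left, hPH⟩⟩,
          ⟨h1, Or.inr ⟨hPD.trans inf_le_right, hPH⟩⟩⟩
  have hσUle : σ ((W₁ ⊓ H) ⊔ (W₂ ⊓ H)) ≤ H := hσle _ hUle
  have hdisj : Disjoint
      {P : Submodule K V | Module.finrank K P = 1 ∧ P ≤ σ ((W₁ ⊓ H) ⊔ (W₂ ⊓ H))}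
      {P : Submodule K V | Module.finrank K P = 1 ∧ P ≤ W₁ ⊓ W₂ ∧ ¬ P ≤ H} := by
    rw [Set.disjoint_left]
    rintro P ⟨_, hPσ⟩ ⟨_, _, hPH⟩
    exact hPH (hPσ.trans hσUle)
  rw [hdecomp, Set.ncard_union_eq hdisj (Set.toFinite _) (Set.toFinite _)]
  by_cases hDH : W₁ ⊓ W₂ ≤ H
  · -- the intersection lies in H: no points outside H
    have hempty : {P : Submodule K V | Module.finrank K P = 1 ∧ P ≤ W₁ ⊓ W₂ ∧ ¬ P ≤ H} = ∅ := by
      ext P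
      simp only [Set.mem_setOf_eq, Set.mem_empty_iff_false, iff_false, not_and]
      intro _ hPD hPH
      exact hPH (hPD.trans hDH)
    have hinfD : (W₁ ⊓ W₂) ⊓ H = W₁ ⊓ W₂ := inf_eq_left.2 hDH
    rw [hinfD] at hsupUrank
    have hdle : Module.finrank K ↥(W₁ ⊓ W₂) ≤ e := by
      have : W₁ ⊓ W₂ ≤ W₁ ⊓ H := le_inf inf_le_left hDH
      have := Submodule.finrank_mono this
      omega
    have hσr := hσrank _ hUle
    have hσreq : Module.finrank K ↥(σ ((W₁ ⊓ H) ⊔ (W₂ ⊓ H))) =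
        Module.finrank K ↥(W₁ ⊓ W₂) := by omega
    rw [hempty, Set.ncard_empty, add_zero, card_pts, hσreq]
  · -- the intersection meets the complement of H
    have hDbot : Module.finrank K ↥(W₁ ⊓ W₂) ≠ 0 := by
      intro h
      rw [Submodule.finrank_eq_zero] at h
      exact hDH (h ▸ bot_le)
    have hDHrank := Submodule.finrank_sup_add_finrank_inf_eq (W₁ ⊓ W₂) H
    rw [hsup _ hDH, finrank_top] at hDHrank
    -- finrank (D ⊓ H) = d - 1
    have hσr := hσrank _ hUle
    have hσreq : Module.finrank K ↥(σ ((W₁ ⊓ H) ⊔ (W₂ ⊓ H))) =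
        Module.finrank K ↥(W₁ ⊓ W₂) - 1 := by omega
    -- the second set is a difference of point sets
    have hsetdiff : {P : Submodule K V | Module.finrank K P = 1 ∧ P ≤ W₁ ⊓ W₂ ∧ ¬ P ≤ H} =
        {P : Submodule K V | Module.finrank K P = 1 ∧ P ≤ W₁ ⊓ W₂} \
        {P : Submodule K V | Module.finrank K P = 1 ∧ P ≤ (W₁ ⊓ W₂) ⊓ H} := by
      ext P
      simp only [Set.mem_setOf_eq, Set.mem_diff, not_and]
      constructor
      · rintro ⟨h1, hPD, hPH⟩
        exact ⟨⟨h1, hPD⟩, fun _ h => hPH (h.trans inf_le_right)⟩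
      · rintro ⟨⟨h1, hPD⟩, hnot⟩
        exact ⟨h1, hPD, fun hPH => hnot h1 (le_inf hPD hPH)⟩
    have hsubpts : {P : Submodule K V | Module.finrank K P = 1 ∧ P ≤ (W₁ ⊓ W₂) ⊓ H} ⊆
        {P : Submodule K V | Module.finrank K P = 1 ∧ P ≤ W₁ ⊓ W₂} := by
      rintro P ⟨h1, h2⟩
      exact ⟨h1, h2.trans inf_le_left⟩
    rw [hsetdiff, Set.ncard_diff hsubpts (Set.toFinite _), card_pts, card_pts, card_pts,
      hσreq]
    have hrDH : Module.finrank K ↥((W₁ ⊓ W₂) ⊓ H) = Module.finrank K ↥(W₁ ⊓ W₂) - 1 := by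
      omega
    rw [hrDH]
    set d := Module.finrank K ↥(W₁ ⊓ W₂) with hd
    set c := Fintype.card K with hc
    have hle : (c ^ (d - 1) - 1) / (c - 1) ≤ (c ^ d - 1) / (c - 1) := by
      apply Nat.div_le_div_right
      have : c ^ (d - 1) ≤ c ^ d := Nat.pow_le_pow_right (by omega) (by omega)
      omega
    omega
end

section
/- Let W₁ ∈ 𝒜 (an (e+1)-dimensional subspace of V not contained in H) and W₂ ∈ ℬ (an (e−1)-dimensional subspace of H), and set f(W₁) = [σ(W₁∩H) ∪ (W₁∖H)] and f(W₂) = [σ(W₂)]. Then |f(W₁) ∩ f(W₂)| = (q^{dim(W₁∩W₂)+1} − 1)/(q − 1). Consequently |f(W₁) ∩ f(W₂)| = (q^e − 1)/(q − 1) if and only if W₁ ⊇ W₂. -/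
lemma count_aux {K V : Type*} [Field K] [Fintype K] [AddCommGroup V] [Module K V]
    [FiniteDimensional K V] (U : Submodule K V) :
    {P : Submodule K V | Module.finrank K P = 1 ∧ (P : Set V) ⊆ U}.ncard
      * (Fintype.card K - 1) = Fintype.card K ^ Module.finrank K U - 1 := by
  classical
  have hfinV : Finite V := Module.finite_of_finite K
  have : Fintype V := Fintype.ofFinite V
  have : Fintype (Submodule K V) := Fintype.ofFinite _
  set q := Fintype.card K
  set d := Module.finrank K U
  -- the finset of nonzero vectors of U
  set T : Finset V := Set.toFinset ((U : Set V) \ {0}) with hT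
  set S : Finset (Submodule K V) :=
    Finset.univ.filter (fun P => Module.finrank K P = 1 ∧ P ≤ U) with hS
  have hTcard : T.card = q ^ d - 1 := by
    have h0 : (0 : V) ∈ (U : Set V) := U.zero_mem
    have : ((U : Set V) \ {0}).toFinset.card = (U : Set V).toFinset.card - 1 := by
      rw [Set.toFinset_diff, Finset.card_sdiff_of_subset]
      · simp
      · intro x hx
        simp at hx
        subst hx
        simp [h0]
    rw [hT, this]
    congr 1
    rw [Set.toFinset_card]
    have := Module.card_eq_pow_finrank (K := K) (V := ↥U)
    simpa [Fintype.card_coe] using this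
  have key : T.card = S.card * (q - 1) := by
    rw [Finset.card_eq_sum_card_fiberwise
      (f := fun v => Submodule.span K {v}) (t := S) ?_]
    · rw [Finset.sum_congr rfl (g := fun _ => q - 1) ?_, Finset.sum_const, smul_eq_mul]
      intro P hP
      simp only [hS, Finset.mem_filter, Finset.mem_univ, true_and] at hP
      have hPT : T.filter (fun v => Submodule.span K {v} = P)
          = Set.toFinset ((P : Set V) \ {0}) := by
        ext v
        simp only [Finset.mem_filter, hT, Set.mem_toFinset, Set.mem_diff,
          Set.mem_singleton_iff, SetLike.mem_coe]
        constructor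
        · rintro ⟨⟨hvU, hv0⟩, hspan⟩
          exact ⟨hspan ▸ Submodule.mem_span_singleton_self v, hv0⟩
        · rintro ⟨hvP, hv0⟩
          refine ⟨⟨hP.2 hvP, hv0⟩, ?_⟩
          exact Submodule.eq_of_le_of_finrank_eq
            (by simpa [Submodule.span_le] using hvP)
            (by rw [finrank_span_singleton hv0, hP.1])
      rw [hPT]
      have h0 : (0 : V) ∈ (P : Set V) := P.zero_mem
      have hc : ((P : Set V) \ {0}).toFinset.card = (P : Set V).toFinset.card - 1 := by
        rw [Set.toFinset_diff, Finset.card_sdiff_of_subset]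
        · simp
        · intro x hx; simp at hx; subst hx; simp [h0]
      rw [hc]
      congr 1
      rw [Set.toFinset_card]
      have := Module.card_eq_pow_finrank (K := K) (V := ↥P)
      simpa [hP.1, Fintype.card_coe] using this
    · intro v hv
      simp only [hT, Set.mem_toFinset, Set.mem_diff, Set.mem_singleton_iff,
        SetLike.mem_coe, Finset.mem_coe] at hv
      simp only [hS, Finset.mem_filter, Finset.mem_univ, true_and, Finset.mem_coe]
      exact ⟨finrank_span_singleton hv.2, by simpa [Submodule.span_le] using hv.1⟩
  have hset : {P : Submodule K V | Module.finrank K P = 1 ∧ (P : Set V) ⊆ U} = ↑S := by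
    ext P
    simp [hS, SetLike.coe_subset_coe]
  rw [hset, Set.ncard_coe_finset, ← key, hTcard]

/-- For `W₁ ∈ 𝒜` and `W₂ ∈ ℬ`, the blocks `f(W₁) = [σ(W₁ ∩ H) ∪ (W₁ \ H)]`
and `f(W₂) = [σ(W₂)]` satisfy `|f(W₁) ∩ f(W₂)| = (q^{dim (W₁ ∩ W₂) + 1} - 1)/(q - 1)`;
consequently `|f(W₁) ∩ f(W₂)| = (q^e - 1)/(q - 1)` if and only if `W₂ ⊆ W₁`. -/
theorem stmt5 (q e : ℕ) (hq : ∃ p n : ℕ, p.Prime ∧ 0 < n ∧ q = p ^ n) (he : 1 ≤ e)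
    (K V : Type*) [Field K] [Fintype K] (hK : Fintype.card K = q)
    [AddCommGroup V] [Module K V] [FiniteDimensional K V]
    (hV : Module.finrank K V = 2 * e + 1)
    (H : Submodule K V) (hH : Module.finrank K ↥H = 2 * e)
    (σ : Submodule K V → Submodule K V)
    (hσle : ∀ W ≤ H, σ W ≤ H)
    (hσinv : ∀ W ≤ H, σ (σ W) = W)
    (hσanti : ∀ W₁ W₂ : Submodule K V, W₁ ≤ H → W₂ ≤ H → W₁ ≤ W₂ → σ W₂ ≤ σ W₁)
    (hσinf : ∀ W₁ W₂ : Submodule K V, W₁ ≤ H → W₂ ≤ H → σ W₁ ⊓ σ W₂ = σ (W₁ ⊔ W₂))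
    (hσrank : ∀ W ≤ H, Module.finrank K ↥(σ W) = 2 * e - Module.finrank K ↥W)
    (W₁ W₂ : Submodule K V) (hW₁ : W₁ ∈ setA e H) (hW₂ : W₂ ∈ setB e H) :
    (blockA σ H W₁ ∩ blockB σ W₂).ncard =
      (q ^ (Module.finrank K ↥(W₁ ⊓ W₂) + 1) - 1) / (q - 1) ∧
    ((blockA σ H W₁ ∩ blockB σ W₂).ncard = (q ^ e - 1) / (q - 1) ↔ W₂ ≤ W₁) := by
  obtain ⟨hW₁rank, hW₁nle⟩ := hW₁
  obtain ⟨hW₂rank, hW₂le⟩ := hW₂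
  have hq2 : 2 ≤ q := hK ▸ Fintype.one_lt_card
  -- Step 1 : W₁ ⊔ H = ⊤
  have htop : W₁ ⊔ H = ⊤ := by
    apply Submodule.eq_top_of_finrank_eq
    have h1 : 2 * e < Module.finrank K ↥(W₁ ⊔ H) := by
      rw [← hH]
      exact Submodule.finrank_lt_finrank_of_lt
        (lt_of_le_of_ne le_sup_right (fun h => hW₁nle (h ▸ le_sup_left)))
    have h2 : Module.finrank K ↥(W₁ ⊔ H) ≤ 2 * e + 1 :=
      hV ▸ Submodule.finrank_le _
    omega
  -- Step 2 : finrank (W₁ ⊓ H) = e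
  have hinfH : Module.finrank K ↥(W₁ ⊓ H) = e := by
    have := Submodule.finrank_sup_add_finrank_inf_eq W₁ H
    rw [htop, finrank_top, hV, hW₁rank, hH] at this
    omega
  -- Step 3 : dimensions of U' = (W₁ ⊓ H) ⊔ W₂
  set U' : Submodule K V := (W₁ ⊓ H) ⊔ W₂ with hU'
  have hU'le : U' ≤ H := sup_le inf_le_right hW₂le
  set m := Module.finrank K ↥(W₁ ⊓ W₂) with hm
  have hinf2 : (W₁ ⊓ H) ⊓ W₂ = W₁ ⊓ W₂ := by
    rw [inf_assoc, inf_eq_right.mpr hW₂le]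
  have hmle : m ≤ e - 1 := by
    rw [hm, ← hW₂rank]
    exact Submodule.finrank_mono inf_le_right
  have hU'rank : Module.finrank K ↥U' = 2 * e - 1 - m := by
    have := Submodule.finrank_sup_add_finrank_inf_eq (W₁ ⊓ H) W₂
    rw [hinf2, hinfH, hW₂rank, ← hm, ← hU'] at this
    omega
  have hσU'rank : Module.finrank K ↥(σ U') = m + 1 := by
    rw [hσrank U' hU'le, hU'rank]
    omega
  -- Step 4 : block intersection is the set of points of σ U'
  have hblk : blockA σ H W₁ ∩ blockB σ W₂
      = {P : Submodule K V | Module.finrank K P = 1 ∧ (P : Set V) ⊆ σ U'} := by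
    ext P
    simp only [blockA, blockB, projPts, Set.mem_inter_iff, Set.mem_setOf_eq]
    constructor
    · rintro ⟨⟨h1, hs1⟩, ⟨-, hs2⟩⟩
      refine ⟨h1, ?_⟩
      have hPle2 : P ≤ σ W₂ := hs2
      have hPle1 : P ≤ σ (W₁ ⊓ H) := by
        intro v hv
        rcases hs1 hv with h | h
        · exact h
        · exact absurd (hσle W₂ hW₂le (hPle2 hv)) h.2
      have : P ≤ σ (W₁ ⊓ H) ⊓ σ W₂ := le_inf hPle1 hPle2
      rw [hσinf (W₁ ⊓ H) W₂ inf_le_right hW₂le] at this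
      exact this
    · rintro ⟨h1, hs⟩
      have hP : P ≤ σ (W₁ ⊓ H) ⊓ σ W₂ := by
        rw [hσinf (W₁ ⊓ H) W₂ inf_le_right hW₂le]; exact hs
      exact ⟨⟨h1, fun v hv => Or.inl (hP.trans inf_le_left hv)⟩,
        ⟨h1, hP.trans inf_le_right⟩⟩
  -- Step 5 : counting
  have hcount := count_aux (σ U')
  rw [hσU'rank, hK] at hcount
  rw [hblk] at *
  have hval : {P : Submodule K V | Module.finrank K P = 1 ∧ (P : Set V) ⊆ σ U'}.ncard
      = (q ^ (m + 1) - 1) / (q - 1) := by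
    rw [← hcount, Nat.mul_div_cancel _ (by omega : 0 < q - 1)]
  refine ⟨hval, ?_, fun hle => ?_⟩
  · intro hcard
    -- deduce m + 1 = e
    have hdvd : (q - 1) ∣ q ^ e - 1 := by
      simpa using Nat.sub_dvd_pow_sub_pow q 1 e
    have h1 : q ^ (m + 1) - 1 = q ^ e - 1 := by
      rw [← hcount, hcard, Nat.div_mul_cancel hdvd]
    have hp1 : 1 ≤ q ^ (m + 1) := Nat.one_le_pow _ _ (by omega)
    have hp2 : 1 ≤ q ^ e := Nat.one_le_pow _ _ (by omega)
    have hpe : q ^ (m + 1) = q ^ e := by omega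
    have hme : m + 1 = e := Nat.pow_right_injective hq2 hpe
    have hWeq : W₁ ⊓ W₂ = W₂ :=
      Submodule.eq_of_le_of_finrank_eq inf_le_right (by rw [← hm, hW₂rank]; omega)
    rw [← hWeq]
    exact inf_le_left
  · have hWeq : W₁ ⊓ W₂ = W₂ := inf_eq_right.mpr hle
    rw [hval, hm, hWeq, hW₂rank, Nat.sub_add_cancel he]
end

section
/- Let φ ∈ ΓL(V)_H and let φ' be the permutation of [V] defined by φ'(⟨x⟩) = σφσ(⟨x⟩) if ⟨x⟩ ∈ [H] and φ'(⟨x⟩) = φ(⟨x⟩) otherwise. Then for every (e+1)-dimensional subspace W of V with W ⊄ H, the image of the block [σ(W∩H) ∪ (W∖H)] under φ' equals [σ(φ(W)∩H) ∪ (φ(W)∖H)]; in particular φ' maps blocks in 𝒜' to blocks in 𝒜'. -/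
/-- The image of a subspace `W` of `V` under a semilinear bijection `φ` of `V`
(an element of the general semilinear group `ΓL(V)`). -/
def semimap {K V : Type*} [Field K] [AddCommGroup V] [Module K V]
    (τ : K ≃+* K) (φ : V ≃+ V)
    (hφ : ∀ (c : K) (x : V), φ (c • x) = τ c • φ x) (W : Submodule K V) :
    Submodule K V where
  carrier := φ '' (W : Set V)
  add_mem' := by
    rintro _ _ ⟨a, ha, rfl⟩ ⟨b, hb, rfl⟩
    exact ⟨a + b, W.add_mem ha hb, map_add φ a b⟩
  zero_mem' := ⟨0, W.zero_mem, map_zero φ⟩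
  smul_mem' := by
    rintro c _ ⟨a, ha, rfl⟩
    exact ⟨τ.symm c • a, W.smul_mem _ ha, by rw [hφ, RingEquiv.apply_symm_apply]⟩

open Classical in
/-- The permutation `φ'` of the projective points of `V` induced by `φ ∈ ΓL(V)_H`:
on points of `H` it acts as `σ φ σ`, elsewhere as `φ`. -/
noncomputable def phiMap {K V : Type*} [Field K] [AddCommGroup V] [Module K V]
    (σ : Submodule K V → Submodule K V) (H : Submodule K V)
    (τ : K ≃+* K) (φ : V ≃+ V)
    (hφ : ∀ (c : K) (x : V), φ (c • x) = τ c • φ x) (P : Submodule K V) : Submodule K V :=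
  if P ≤ H then σ (semimap τ φ hφ (σ P)) else semimap τ φ hφ P

section Aux

variable {K V : Type*} [Field K] [AddCommGroup V] [Module K V]
variable (τ : K ≃+* K) (φ : V ≃+ V) (hφ : ∀ (c : K) (x : V), φ (c • x) = τ c • φ x)

theorem coe_semimap (W : Submodule K V) :
    (semimap τ φ hφ W : Set V) = φ '' (W : Set V) := rfl

theorem hφ_symm (hφ : ∀ (c : K) (x : V), φ (c • x) = τ c • φ x) :
    ∀ (c : K) (x : V), φ.symm (c • x) = τ.symm c • φ.symm x := by
  intro c x
  apply φ.injective
  rw [hφ, RingEquiv.apply_symm_apply, φ.apply_symm_apply, φ.apply_symm_apply]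

theorem semimap_symm_semimap (W : Submodule K V) :
    semimap τ.symm φ.symm (hφ_symm τ φ hφ) (semimap τ φ hφ W) = W := by
  apply SetLike.coe_injective
  rw [coe_semimap, coe_semimap]
  simp [Set.image_image]

theorem semimap_semimap_symm (W : Submodule K V) :
    semimap τ φ hφ (semimap τ.symm φ.symm (hφ_symm τ φ hφ) W) = W := by
  apply SetLike.coe_injective
  rw [coe_semimap, coe_semimap]
  simp [Set.image_image]

theorem semimap_le_iff {W₁ W₂ : Submodule K V} :
    semimap τ φ hφ W₁ ≤ semimap τ φ hφ W₂ ↔ W₁ ≤ W₂ := by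
  constructor
  · intro h x hx
    obtain ⟨a, ha, he⟩ := h ⟨x, hx, rfl⟩
    rwa [← φ.injective he]
  · rintro h _ ⟨a, ha, rfl⟩
    exact ⟨a, h ha, rfl⟩

theorem semimap_inf (W₁ W₂ : Submodule K V) :
    semimap τ φ hφ (W₁ ⊓ W₂) = semimap τ φ hφ W₁ ⊓ semimap τ φ hφ W₂ := by
  apply SetLike.coe_injective
  show φ '' ((W₁ ⊓ W₂ : Submodule K V) : Set V)
      = (semimap τ φ hφ W₁ : Set V) ∩ (semimap τ φ hφ W₂ : Set V)
  rw [coe_semimap, coe_semimap,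
    show ((W₁ ⊓ W₂ : Submodule K V) : Set V) = (W₁ : Set V) ∩ (W₂ : Set V) from rfl,
    Set.image_inter φ.injective]

theorem finrank_semimap (W : Submodule K V) :
    Module.finrank K (semimap τ φ hφ W) = Module.finrank K W := by
  let j : W ≃+ semimap τ φ hφ W :=
    { toFun := fun x => ⟨φ (x : V), ⟨(x : V), x.2, rfl⟩⟩
      invFun := fun y => ⟨φ.symm (y : V), by
        obtain ⟨a, ha, he⟩ := y.2
        rw [← he, φ.symm_apply_apply]; exact ha⟩
      left_inv := fun x => by ext; simp
      right_inv := fun y => by ext; simp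
      map_add' := fun a b => by ext; exact map_add φ (a : V) (b : V) }
  have hr : Module.rank K W = Module.rank K (semimap τ φ hφ W) := by
    refine rank_eq_of_equiv_equiv (ZeroHom.mk (τ : K → K) (map_zero τ)) j τ.bijective ?_
    intro r m
    ext
    exact hφ r m
  rw [Module.finrank, Module.finrank, hr]

theorem eq_span_of_mem_rank1 [FiniteDimensional K V] {P : Submodule K V}
    (h1 : Module.finrank K P = 1) {x : V} (hx : x ∈ P) (hx0 : x ≠ 0) :
    P = Submodule.span K {x} := by
  have hle : Submodule.span K {x} ≤ P := by
    rw [Submodule.span_le, Set.singleton_subset_iff]; exact hx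
  have h1' : Module.finrank K (Submodule.span K ({x} : Set V)) = 1 := by
    simpa using finrank_span_singleton hx0
  exact (Submodule.eq_of_le_of_finrank_le hle (by rw [h1, h1'])).symm

theorem mem_blockA [FiniteDimensional K V]
    (σ : Submodule K V → Submodule K V) (H W : Submodule K V)
    (hWH : W ⊓ H ≤ H) (hσle : σ (W ⊓ H) ≤ H) {P : Submodule K V} :
    P ∈ blockA σ H W ↔ Module.finrank K P = 1 ∧
      (P ≤ σ (W ⊓ H) ∨ (P ≤ W ∧ ¬ P ≤ H)) := by
  constructor
  · rintro ⟨h1, hsub⟩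
    refine ⟨h1, ?_⟩
    by_cases hPH : P ≤ H
    · left
      intro x hx
      rcases hsub hx with h | h
      · exact h
      · exact absurd (hPH hx) h.2
    · right
      obtain ⟨x, hxP, hxH⟩ := SetLike.not_le_iff_exists.mp hPH
      have hx0 : x ≠ 0 := fun h => hxH (h ▸ H.zero_mem)
      have hxW : x ∈ (W : Set V) \ (H : Set V) := by
        rcases hsub hxP with h | h
        · exact absurd (hσle h) hxH
        · exact h
      have hsp := eq_span_of_mem_rank1 h1 hxP hx0
      constructor
      · rw [hsp, Submodule.span_le, Set.singleton_subset_iff]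
        exact hxW.1
      · exact hPH
  · rintro ⟨h1, h | ⟨hW, hH'⟩⟩
    · exact ⟨h1, fun x hx => Or.inl (h hx)⟩
    · refine ⟨h1, fun x hx => ?_⟩
      by_cases hxH : x ∈ H
      · left
        by_cases hx0 : x = 0
        · rw [hx0]; exact (σ (W ⊓ H)).zero_mem
        · exfalso
          apply hH'
          rw [eq_span_of_mem_rank1 h1 hx hx0, Submodule.span_le,
            Set.singleton_subset_iff]
          exact hxH
      · exact Or.inr ⟨hW hx, hxH⟩

end Aux

/-- For `φ ∈ ΓL(V)_H`, the induced permutation `φ'` of the projective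
points (acting as `σφσ` on points of `H` and as `φ` elsewhere) maps the block
`[σ(W ∩ H) ∪ (W \ H)]` to `[σ(φ(W) ∩ H) ∪ (φ(W) \ H)]` for every `W ∈ 𝒜`; in particular
`φ'` maps blocks in `𝒜'` to blocks in `𝒜'`. -/
theorem stmt7 (q e : ℕ) (hq : ∃ p n : ℕ, p.Prime ∧ 0 < n ∧ q = p ^ n) (he : 1 ≤ e)
    (K V : Type*) [Field K] [Fintype K] (hK : Fintype.card K = q)
    [AddCommGroup V] [Module K V] [FiniteDimensional K V]
    (hV : Module.finrank K V = 2 * e + 1)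
    (H : Submodule K V) (hH : Module.finrank K ↥H = 2 * e)
    (σ : Submodule K V → Submodule K V)
    (hσle : ∀ W ≤ H, σ W ≤ H)
    (hσinv : ∀ W ≤ H, σ (σ W) = W)
    (hσanti : ∀ W₁ W₂ : Submodule K V, W₁ ≤ H → W₂ ≤ H → W₁ ≤ W₂ → σ W₂ ≤ σ W₁)
    (hσinf : ∀ W₁ W₂ : Submodule K V, W₁ ≤ H → W₂ ≤ H → σ W₁ ⊓ σ W₂ = σ (W₁ ⊔ W₂))
    (hσrank : ∀ W ≤ H, Module.finrank K ↥(σ W) = 2 * e - Module.finrank K ↥W)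
    (τ : K ≃+* K) (φ : V ≃+ V) (hφ : ∀ (c : K) (x : V), φ (c • x) = τ c • φ x)
    (hφH : semimap τ φ hφ H = H) :
    (∀ W ∈ setA e H,
      phiMap σ H τ φ hφ '' blockA σ H W = blockA σ H (semimap τ φ hφ W)) ∧
    (∀ B ∈ blockA σ H '' setA e H,
      phiMap σ H τ φ hφ '' B ∈ blockA σ H '' setA e H) := by
  set s := semimap τ φ hφ with hsdef
  have hφ' := hφ_symm τ φ hφ
  set s' := semimap τ.symm φ.symm hφ' with hs'def
  have hss' : ∀ W, s (s' W) = W := semimap_semimap_symm τ φ hφ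
  have hs's : ∀ W, s' (s W) = W := semimap_symm_semimap τ φ hφ
  have hsle : ∀ {W₁ W₂ : Submodule K V}, s W₁ ≤ s W₂ ↔ W₁ ≤ W₂ :=
    fun {W₁ W₂} => semimap_le_iff τ φ hφ
  have hs'le : ∀ {W₁ W₂ : Submodule K V}, s' W₁ ≤ s' W₂ ↔ W₁ ≤ W₂ :=
    fun {W₁ W₂} => semimap_le_iff τ.symm φ.symm hφ'
  have hsinf : ∀ W₁ W₂ : Submodule K V, s (W₁ ⊓ W₂) = s W₁ ⊓ s W₂ := semimap_inf τ φ hφ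
  have hsrank : ∀ W : Submodule K V, Module.finrank K (s W) = Module.finrank K W :=
    finrank_semimap τ φ hφ
  have hs'rank : ∀ W : Submodule K V, Module.finrank K (s' W) = Module.finrank K W :=
    finrank_semimap τ.symm φ.symm hφ'
  have hs'H : s' H = H := by
    have h := hs's H
    rwa [hφH] at h
  have main : ∀ W ∈ setA e H, phiMap σ H τ φ hφ '' blockA σ H W = blockA σ H (s W) := by
    intro W hWsetA
    have hσWH : σ (W ⊓ H) ≤ H := hσle _ inf_le_right
    have hsWH : s W ⊓ H = s (W ⊓ H) := by rw [hsinf, hφH]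
    have hσsWH : σ (s W ⊓ H) ≤ H := hσle _ inf_le_right
    ext Q
    constructor
    · rintro ⟨P, hP, rfl⟩
      rw [mem_blockA σ H W inf_le_right hσWH] at hP
      obtain ⟨h1, hcase⟩ := hP
      rw [mem_blockA σ H (s W) inf_le_right hσsWH]
      rcases hcase with hPσ | ⟨hPW, hPH⟩
      · have hPH : P ≤ H := le_trans hPσ hσWH
        have hσPH : σ P ≤ H := hσle P hPH
        have hsσPH : s (σ P) ≤ H := by
          have := hsle.mpr hσPH
          rwa [hφH] at this
        have hφ'P : phiMap σ H τ φ hφ P = σ (s (σ P)) := by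
          simp only [phiMap, if_pos hPH]
          rfl
        rw [hφ'P]
        constructor
        · rw [hσrank _ hsσPH, hsrank, hσrank P hPH, h1]; omega
        · left
          rw [hsWH]
          apply hσanti _ _ ?_ hsσPH
          · have h2 : W ⊓ H ≤ σ P := by
              have := hσanti P (σ (W ⊓ H)) hPH hσWH hPσ
              rwa [hσinv _ inf_le_right] at this
            exact hsle.mpr h2
          · have : s (W ⊓ H) ≤ s H := hsle.mpr inf_le_right
            rwa [hφH] at this
      · have hφ'P : phiMap σ H τ φ hφ P = s P := by
          simp only [phiMap, if_neg hPH]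
          rfl
        rw [hφ'P]
        refine ⟨by rw [hsrank, h1], Or.inr ⟨hsle.mpr hPW, fun h => ?_⟩⟩
        rw [← hφH] at h
        exact hPH (hsle.mp h)
    · intro hQ
      rw [mem_blockA σ H (s W) inf_le_right hσsWH] at hQ
      obtain ⟨h1, hcase⟩ := hQ
      rcases hcase with hQσ | ⟨hQW, hQH⟩
      · have hQH : Q ≤ H := le_trans hQσ hσsWH
        have hσQH : σ Q ≤ H := hσle Q hQH
        have hs'σQH : s' (σ Q) ≤ H := by
          have := hs'le.mpr hσQH
          rwa [hs'H] at this
        refine ⟨σ (s' (σ Q)), ?_, ?_⟩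
        · rw [mem_blockA σ H W inf_le_right hσWH]
          constructor
          · rw [hσrank _ hs'σQH, hs'rank, hσrank Q hQH, h1]; omega
          · left
            apply hσanti (W ⊓ H) (s' (σ Q)) inf_le_right hs'σQH
            have h2 : s W ⊓ H ≤ σ Q := by
              have := hσanti Q (σ (s W ⊓ H)) hQH hσsWH hQσ
              rwa [hσinv _ inf_le_right] at this
            have h3 : s' (s W ⊓ H) ≤ s' (σ Q) := hs'le.mpr h2
            rwa [hsWH, hs's] at h3
        · have hP'H : σ (s' (σ Q)) ≤ H := hσle _ hs'σQH
          simp only [phiMap, if_pos hP'H]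
          rw [hσinv _ hs'σQH, ← hsdef, hss', hσinv _ hQH]
      · have hs'QW : s' Q ≤ W := by
          have := hs'le.mpr hQW
          rwa [hs's] at this
        have hs'QH : ¬ s' Q ≤ H := fun h => by
          have := hsle.mpr h
          rw [hss', hφH] at this
          exact hQH this
        refine ⟨s' Q, ?_, ?_⟩
        · rw [mem_blockA σ H W inf_le_right hσWH]
          exact ⟨by rw [hs'rank, h1], Or.inr ⟨hs'QW, hs'QH⟩⟩
        · simp only [phiMap, if_neg hs'QH]
          exact hss' Q
  refine ⟨main, ?_⟩
  rintro B ⟨W, hWsetA, rfl⟩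
  refine ⟨s W, ⟨?_, ?_⟩, (main W hWsetA).symm⟩
  · rw [hsrank]; exact hWsetA.1
  · intro h
    rw [← hφH] at h
    exact hWsetA.2 (hsle.mp h)
end

section
/- Let α be an automorphism of the Jungnickel–Tonchev design ([V], 𝒜' ∪ ℬ'), inducing a permutation of the block set 𝒜' ∪ ℬ' (denoted also α), and let f : 𝒜 ∪ ℬ → 𝒜' ∪ ℬ' be the bijection sending W ∈ 𝒜 to [σ(W∩H) ∪ (W∖H)] and W ∈ ℬ to [σ(W)]. Then f⁻¹ ∘ α ∘ f is an automorphism of the twisted Grassmann graph J̃_q(2e+1,e). -/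
/-- The projective points of `V`: the 1-dimensional subspaces. -/
abbrev Pt (K V : Type*) [Field K] [AddCommGroup V] [Module K V] :=
  {P : Submodule K V // Module.finrank K P = 1}

/-- The set of projective points contained in a subset `S` of `V`. -/
def projPt {K V : Type*} [Field K] [AddCommGroup V] [Module K V]
    (S : Set V) : Set (Pt K V) :=
  {P | ((P : Submodule K V) : Set V) ⊆ S}

/-- The block `[σ(W ∩ H) ∪ (W \ H)]` associated to `W ∈ 𝒜`, as a set of projective points. -/
def blockAPt {K V : Type*} [Field K] [AddCommGroup V] [Module K V]
    (σ : Submodule K V → Submodule K V) (H W : Submodule K V) : Set (Pt K V) :=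
  projPt ((σ (W ⊓ H) : Set V) ∪ ((W : Set V) \ (H : Set V)))

/-- The block `[σ(W)]` associated to `W ∈ ℬ`, as a set of projective points. -/
def blockBPt {K V : Type*} [Field K] [AddCommGroup V] [Module K V]
    (σ : Submodule K V → Submodule K V) (W : Submodule K V) : Set (Pt K V) :=
  projPt (σ W : Set V)

/-- The block set `𝒜' ∪ ℬ'` of the Jungnickel–Tonchev design, as sets of projective
points. -/
def blocksJTPt {K V : Type*} [Field K] [AddCommGroup V] [Module K V]
    (e : ℕ) (σ : Submodule K V → Submodule K V) (H : Submodule K V) :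
    Set (Set (Pt K V)) :=
  (blockAPt σ H '' setA e H) ∪
    {B | ∃ W : Submodule K V, Module.finrank K W = e + 1 ∧ W ≤ H ∧ B = projPt (W : Set V)}

open Classical in
/-- The map `f` sending `W ∈ 𝒜` to `[σ(W ∩ H) ∪ (W \ H)]` and `W ∈ ℬ` to `[σ(W)]`. -/
noncomputable def fJTPt {K V : Type*} [Field K] [AddCommGroup V] [Module K V]
    (σ : Submodule K V → Submodule K V) (e : ℕ) (H : Submodule K V)
    (W : Submodule K V) : Set (Pt K V) :=
  if W ∈ setA e H then blockAPt σ H W else blockBPt σ W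


open Module Set

set_option linter.unusedSectionVars false
namespace JTaux

variable {K V : Type*} [Field K] [AddCommGroup V] [Module K V]

/-- The 1-dimensional submodules contained in `U`, as a set of submodules. -/
def pts1 (U : Submodule K V) : Set (Submodule K V) :=
  {P | Module.finrank K P = 1 ∧ P ≤ U}

section fd
variable [FiniteDimensional K V]

lemma point_eq_span {P : Submodule K V} (hP : Module.finrank K P = 1) {y : V}
    (hy : y ∈ P) (h0 : y ≠ 0) : P = Submodule.span K {y} := by
  have hle : Submodule.span K {y} ≤ P := by
    rw [Submodule.span_singleton_le_iff_mem]; exact hy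
  exact (Submodule.eq_of_le_of_finrank_eq hle
    (by rw [finrank_span_singleton h0, hP])).symm

lemma point_notin {P H : Submodule K V} (hP : Module.finrank K P = 1)
    (hPH : ¬ P ≤ H) {y : V} (hy : y ∈ P) (h0 : y ≠ 0) : y ∉ H := by
  intro hyH
  exact hPH ((point_eq_span hP hy h0) ▸ (Submodule.span_singleton_le_iff_mem y H).2 hyH)

lemma le_of_pts1_subset {U₁ U₂ : Submodule K V}
    (h : ∀ P : Submodule K V, Module.finrank K P = 1 → P ≤ U₁ → P ≤ U₂) : U₁ ≤ U₂ := by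
  intro x hx
  rcases eq_or_ne x 0 with rfl | hx0
  · exact U₂.zero_mem
  · exact h (Submodule.span K {x}) (finrank_span_singleton hx0)
      ((Submodule.span_singleton_le_iff_mem x U₁).2 hx) (Submodule.mem_span_singleton_self x)

lemma ncard_pts1_eq_of_finrank_eq {U₁ U₂ : Submodule K V}
    (h : Module.finrank K U₁ = Module.finrank K U₂) :
    (pts1 U₁).ncard = (pts1 U₂).ncard := by
  obtain ⟨φ⟩ := FiniteDimensional.nonempty_linearEquiv_of_finrank_eq h
  set ψ : ↥U₁ →ₗ[K] V := U₂.subtype.comp φ.toLinearMap with hψdef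
  have hψ : Function.Injective ψ := U₂.injective_subtype.comp φ.injective
  set T : Submodule K V → Submodule K V :=
    fun P => Submodule.map ψ (Submodule.comap U₁.subtype P) with hTdef
  have hrank : ∀ P : Submodule K V, P ≤ U₁ →
      Module.finrank K (T P) = Module.finrank K P := by
    intro P hle
    have h1 : Module.finrank K (Submodule.comap U₁.subtype P) = Module.finrank K P :=
      (Submodule.comapSubtypeEquivOfLe hle).finrank_eq
    have h2 := (Submodule.equivMapOfInjective ψ hψ (Submodule.comap U₁.subtype P)).finrank_eq
    rw [hTdef, ← h2, h1]
  have himg : T '' pts1 U₁ = pts1 U₂ := by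
    ext Q
    constructor
    · rintro ⟨P, ⟨hP1, hPle⟩, rfl⟩
      refine ⟨by rw [hrank P hPle, hP1], ?_⟩
      rintro x ⟨y, -, rfl⟩
      exact (φ y).2
    · rintro ⟨hQ1, hQle⟩
      set R : Submodule K ↥U₁ :=
        Submodule.comap φ.toLinearMap (Submodule.comap U₂.subtype Q) with hR
      have hmapR : Submodule.map φ.toLinearMap R = Submodule.comap U₂.subtype Q :=
        Submodule.map_comap_eq_of_surjective φ.surjective _
      set P : Submodule K V := Submodule.map U₁.subtype R with hP
      have hPle : P ≤ U₁ := Submodule.map_subtype_le _ _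
      have hTP : T P = Q := by
        show Submodule.map ψ (Submodule.comap U₁.subtype P) = Q
        rw [hP, Submodule.comap_map_eq_of_injective U₁.injective_subtype,
          hψdef, Submodule.map_comp, hmapR, Submodule.map_comap_subtype]
        exact inf_eq_right.2 hQle
      refine ⟨P, ⟨?_, hPle⟩, hTP⟩
      rw [← hrank P hPle, hTP, hQ1]
  have hinj : Set.InjOn T (pts1 U₁) := by
    intro P hP P' hP' hTT
    have := Submodule.map_injective_of_injective hψ hTT
    have h2 := congrArg (Submodule.map U₁.subtype) this
    rw [Submodule.map_comap_subtype, Submodule.map_comap_subtype,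
      inf_eq_right.2 hP.2, inf_eq_right.2 hP'.2] at h2
    exact h2
  rw [← himg, Set.ncard_image_of_injOn hinj]

lemma exists_le_finrank (m : ℕ) (U : Submodule K V) (h : m ≤ Module.finrank K U) :
    ∃ U' ≤ U, Module.finrank K U' = m := by
  induction m with
  | zero => exact ⟨⊥, bot_le, finrank_bot K V⟩
  | succ n ih =>
    obtain ⟨U', hle, hrank⟩ := ih (Nat.le_of_succ_le h)
    have hne : U' ≠ U := by
      intro hEq
      rw [hEq] at hrank
      omega
    obtain ⟨x, hxU, hxU'⟩ := SetLike.exists_of_lt (lt_of_le_of_ne hle hne)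
    have hx0 : x ≠ 0 := fun h0 => hxU' (h0 ▸ U'.zero_mem)
    refine ⟨U' ⊔ Submodule.span K {x}, sup_le hle
      ((Submodule.span_singleton_le_iff_mem x U).2 hxU), ?_⟩
    have hbot : U' ⊓ Submodule.span K {x} = ⊥ := by
      rw [eq_bot_iff]
      rintro y ⟨hy1, hy2⟩
      obtain ⟨c, rfl⟩ := Submodule.mem_span_singleton.1 hy2
      rcases eq_or_ne c 0 with rfl | hc
      · simp
      · have h2 := U'.smul_mem c⁻¹ hy1
        rw [inv_smul_smul₀ hc] at h2
        exact absurd h2 hxU'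
    have := Submodule.finrank_sup_add_finrank_inf_eq U' (Submodule.span K {x})
    rw [hbot, finrank_bot, hrank, finrank_span_singleton hx0] at this
    omega

end fd
end JTaux

namespace JTaux

variable {K V : Type*} [Field K] [AddCommGroup V] [Module K V]

/-- The projective points contained in `U`, as a set of `Pt K V`. -/
def psetP (U : Submodule K V) : Set (Pt K V) :=
  {P | (P : Submodule K V) ≤ U}

/-- The projective points contained in `U` but not in `H`. -/
def opsetP (H U : Submodule K V) : Set (Pt K V) :=
  {P | (P : Submodule K V) ≤ U ∧ ¬ (P : Submodule K V) ≤ H}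

lemma psetP_inter (U₁ U₂ : Submodule K V) :
    psetP U₁ ∩ psetP U₂ = psetP (U₁ ⊓ U₂) := by
  ext P
  simp [psetP, le_inf_iff]

lemma opsetP_inter (H U₁ U₂ : Submodule K V) :
    opsetP H U₁ ∩ opsetP H U₂ = opsetP H (U₁ ⊓ U₂) := by
  ext P
  simp only [opsetP, Set.mem_inter_iff, Set.mem_setOf_eq, le_inf_iff]
  tauto

lemma disjoint_psetP_opsetP {H U₁ : Submodule K V} (h : U₁ ≤ H) (U₂ : Submodule K V) :
    Disjoint (psetP U₁) (opsetP H U₂) := by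
  rw [Set.disjoint_left]
  rintro P hP ⟨-, h2⟩
  exact h2 (le_trans hP h)

lemma psetP_split (H U : Submodule K V) :
    psetP U = psetP (U ⊓ H) ∪ opsetP H U := by
  ext P
  constructor
  · intro hP
    by_cases hPH : (P : Submodule K V) ≤ H
    · exact Or.inl (show (P : Submodule K V) ≤ U ⊓ H from le_inf hP hPH)
    · exact Or.inr ⟨hP, hPH⟩
  · rintro (h | ⟨h1, -⟩)
    · exact le_trans (show (P : Submodule K V) ≤ U ⊓ H from h) inf_le_left
    · exact h1

lemma ncard_psetP_split [Finite (Submodule K V)] (H U : Submodule K V) :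
    (psetP U : Set (Pt K V)).ncard = (psetP (U ⊓ H)).ncard + (opsetP H U).ncard := by
  rw [psetP_split H U, Set.ncard_union_eq (disjoint_psetP_opsetP inf_le_right U)]

section fd
variable [FiniteDimensional K V]

lemma ncard_psetP_pts1 (U : Submodule K V) :
    (psetP U : Set (Pt K V)).ncard = (pts1 U).ncard := by
  rw [← Set.ncard_image_of_injOn (Subtype.val_injective.injOn)]
  congr 1
  ext Q
  constructor
  · rintro ⟨P, hP, rfl⟩
    exact ⟨P.2, hP⟩
  · rintro ⟨hQ1, hQle⟩
    exact ⟨⟨Q, hQ1⟩, hQle, rfl⟩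

lemma ncard_psetP_eq_of_finrank_eq {U₁ U₂ : Submodule K V}
    (h : Module.finrank K U₁ = Module.finrank K U₂) :
    (psetP U₁ : Set (Pt K V)).ncard = (psetP U₂).ncard := by
  rw [ncard_psetP_pts1, ncard_psetP_pts1]
  exact ncard_pts1_eq_of_finrank_eq h

lemma ncard_pts1_lt [Finite (Submodule K V)] {U₁ U₂ : Submodule K V}
    (h : Module.finrank K U₁ < Module.finrank K U₂) :
    (pts1 U₁).ncard < (pts1 U₂).ncard := by
  obtain ⟨U', hle, hrank⟩ := exists_le_finrank (Module.finrank K U₁) U₂ h.le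
  have hlt : U' < U₂ := lt_of_le_of_ne hle (fun hEq => by rw [hEq] at hrank; omega)
  obtain ⟨x, hxU₂, hxU'⟩ := SetLike.exists_of_lt hlt
  have hx0 : x ≠ 0 := fun h0 => hxU' (h0 ▸ U'.zero_mem)
  have hss : pts1 U' ⊂ pts1 U₂ := by
    constructor
    · exact fun P hP => ⟨hP.1, hP.2.trans hlt.le⟩
    · intro hsub
      have hmem : Submodule.span K {x} ∈ pts1 U₂ :=
        ⟨finrank_span_singleton hx0, (Submodule.span_singleton_le_iff_mem x U₂).2 hxU₂⟩
      exact hxU' ((hsub hmem).2 (Submodule.mem_span_singleton_self x))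
  rw [ncard_pts1_eq_of_finrank_eq hrank.symm]
  exact Set.ncard_lt_ncard hss (Set.toFinite _)

lemma ncard_psetP_lt [Finite (Submodule K V)] {U₁ U₂ : Submodule K V}
    (h : Module.finrank K U₁ < Module.finrank K U₂) :
    (psetP U₁ : Set (Pt K V)).ncard < (psetP U₂).ncard := by
  rw [ncard_psetP_pts1, ncard_psetP_pts1]
  exact ncard_pts1_lt h

lemma blockB_eq (σ : Submodule K V → Submodule K V) (W : Submodule K V) :
    blockBPt σ W = psetP (σ W) := by
  ext P
  simp only [blockBPt, projPt, Set.mem_setOf_eq, SetLike.coe_subset_coe, psetP]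

/-- decomposition of an `𝒜`-block into its `H`-part and its outside part. -/
lemma blockA_decomp {σ : Submodule K V → Submodule K V} {H W : Submodule K V}
    (hs : σ (W ⊓ H) ≤ H) :
    blockAPt σ H W = psetP (σ (W ⊓ H)) ∪ opsetP H W := by
  ext P
  constructor
  · intro hp
    by_cases hPH : (P : Submodule K V) ≤ H
    · left
      intro x hx
      rcases hp hx with h | h
      · exact h
      · exact absurd (hPH hx) h.2
    · right
      refine ⟨?_, hPH⟩
      intro x hx
      rcases eq_or_ne x 0 with rfl | hx0
      · exact W.zero_mem
      · rcases hp hx with h | h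
        · exact absurd (hs h) (point_notin P.2 hPH hx hx0)
        · exact h.1
  · rintro (h | h)
    · intro x hx
      exact Or.inl (h hx)
    · intro x hx
      rcases eq_or_ne x 0 with rfl | hx0
      · exact Or.inl (σ (W ⊓ H)).zero_mem
      · exact Or.inr ⟨h.1 hx, point_notin P.2 h.2 hx hx0⟩

end fd
end JTaux

/-- If `α` is an automorphism of the Jungnickel–Tonchev design and `f` is
the bijection from `𝒜 ∪ ℬ` onto the block set, then `f⁻¹ ∘ α ∘ f` (formalized as any map
`g` on `𝒜 ∪ ℬ` satisfying `f ∘ g = α ∘ f` there) is an automorphism of the twisted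
Grassmann graph `J̃_q(2e+1, e)`. -/
theorem stmt11 (q e : ℕ) (hq : ∃ p n : ℕ, p.Prime ∧ 0 < n ∧ q = p ^ n) (he : 2 ≤ e)
    (K V : Type*) [Field K] [Fintype K] (hK : Fintype.card K = q)
    [AddCommGroup V] [Module K V] [FiniteDimensional K V]
    (hV : Module.finrank K V = 2 * e + 1)
    (H : Submodule K V) (hH : Module.finrank K ↥H = 2 * e)
    (σ : Submodule K V → Submodule K V)
    (hσle : ∀ W ≤ H, σ W ≤ H)
    (hσinv : ∀ W ≤ H, σ (σ W) = W)
    (hσanti : ∀ W₁ W₂ : Submodule K V, W₁ ≤ H → W₂ ≤ H → W₁ ≤ W₂ → σ W₂ ≤ σ W₁)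
    (hσinf : ∀ W₁ W₂ : Submodule K V, W₁ ≤ H → W₂ ≤ H → σ W₁ ⊓ σ W₂ = σ (W₁ ⊔ W₂))
    (hσrank : ∀ W ≤ H, Module.finrank K ↥(σ W) = 2 * e - Module.finrank K ↥W)
    (α : Equiv.Perm (Pt K V))
    (hα : ∀ B ∈ blocksJTPt e σ H, (fun P => α P) '' B ∈ blocksJTPt e σ H)
    (g : Submodule K V → Submodule K V)
    (hg : ∀ W ∈ setA e H ∪ setB e H, g W ∈ setA e H ∪ setB e H ∧
      fJTPt σ e H (g W) = (fun P => α P) '' fJTPt σ e H W) :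
    Set.BijOn g (setA e H ∪ setB e H) (setA e H ∪ setB e H) ∧
    ∀ W₁ ∈ setA e H ∪ setB e H, ∀ W₂ ∈ setA e H ∪ setB e H,
      ((W₁ ≠ W₂ ∧ twistedAdj e H W₁ W₂) ↔ (g W₁ ≠ g W₂ ∧ twistedAdj e H (g W₁) (g W₂))) := by
  classical
  haveI : Finite V := Module.finite_of_finite K
  haveI : Finite (Submodule K V) :=
    Finite.of_injective (fun U : Submodule K V => (U : Set V)) SetLike.coe_injective
  -- basic facts about `f`
  have hfA : ∀ W ∈ setA e H, fJTPt σ e H W = JTaux.psetP (σ (W ⊓ H)) ∪ JTaux.opsetP H W := by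
    intro W hW
    rw [fJTPt, if_pos hW]
    exact JTaux.blockA_decomp (hσle _ inf_le_right)
  have hfB : ∀ W ∈ setB e H, fJTPt σ e H W = JTaux.psetP (σ W) := by
    intro W hW
    rw [fJTPt, if_neg (fun hA => hA.2 hW.2), JTaux.blockB_eq]
  -- dimension facts
  have hinfH : ∀ U : Submodule K V, ¬ U ≤ H →
      Module.finrank K ↥(U ⊓ H) + 1 = Module.finrank K ↥U := by
    intro U hU
    have hsup : U ⊔ H = ⊤ := by
      have h1 : H < U ⊔ H :=
        lt_of_le_of_ne le_sup_right (fun hEq => hU (le_sup_left.trans_eq hEq.symm))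
      have h2 := Submodule.finrank_lt_finrank_of_lt h1
      have h3 := Submodule.finrank_le (U ⊔ H)
      apply Submodule.eq_top_of_finrank_eq
      rw [hV]
      rw [hH] at h2
      rw [hV] at h3
      omega
    have h4 := Submodule.finrank_sup_add_finrank_inf_eq U H
    rw [hsup, finrank_top, hV, hH] at h4
    omega
  have hWHe : ∀ W ∈ setA e H, Module.finrank K ↥(W ⊓ H) = e := by
    intro W hW
    have h1 := hinfH W hW.2
    have h2 := hW.1
    omega
  -- the reference cardinality `t`
  obtain ⟨E₀, -, hE₀⟩ := JTaux.exists_le_finrank e (⊤ : Submodule K V)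
    (by rw [finrank_top, hV]; omega)
  set t := (JTaux.psetP E₀ : Set (Pt K V)).ncard with ht
  have hcard_iff : ∀ U : Submodule K V, Module.finrank K ↥U ≤ e →
      ((JTaux.psetP U : Set (Pt K V)).ncard = t ↔ Module.finrank K ↥U = e) := by
    intro U hU
    constructor
    · intro hc
      by_contra hne'
      have hlt := JTaux.ncard_psetP_lt (U₁ := U) (U₂ := E₀) (by omega)
      omega
    · intro h
      exact JTaux.ncard_psetP_eq_of_finrank_eq (by omega)
  -- symmetry of adjacency
  have hadj_symm : ∀ W₁ W₂ : Submodule K V, twistedAdj e H W₁ W₂ → twistedAdj e H W₂ W₁ := by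
    intro W₁ W₂ h
    rcases h with ⟨h1, h2, h3⟩ | ⟨h1, h2, h3⟩ | ⟨h1, h2, h3⟩ | ⟨h1, h2, h3⟩
    · exact Or.inl ⟨h2, h1, by rwa [inf_comm W₂ W₁]⟩
    · exact Or.inr (Or.inr (Or.inl ⟨h2, h1, h3⟩))
    · exact Or.inr (Or.inl ⟨h2, h1, h3⟩)
    · exact Or.inr (Or.inr (Or.inr ⟨h2, h1, by rwa [inf_comm W₂ W₁]⟩))
  -- key lemma, case 𝒜-𝒜
  have keyAA : ∀ W₁ ∈ setA e H, ∀ W₂ ∈ setA e H, W₁ ≠ W₂ →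
      (twistedAdj e H W₁ W₂ ↔ (fJTPt σ e H W₁ ∩ fJTPt σ e H W₂).ncard = t) := by
    intro W₁ h₁ W₂ h₂ hne
    have hs₁ : σ (W₁ ⊓ H) ≤ H := hσle _ inf_le_right
    have hs₂ : σ (W₂ ⊓ H) ≤ H := hσle _ inf_le_right
    have hint : fJTPt σ e H W₁ ∩ fJTPt σ e H W₂ =
        JTaux.psetP (σ (W₁ ⊓ H) ⊓ σ (W₂ ⊓ H)) ∪ JTaux.opsetP H (W₁ ⊓ W₂) := by
      rw [hfA W₁ h₁, hfA W₂ h₂, ← JTaux.psetP_inter, ← JTaux.opsetP_inter]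
      ext P
      simp only [Set.mem_inter_iff, Set.mem_union]
      constructor
      · rintro ⟨h1 | h1, h2 | h2⟩
        · exact Or.inl ⟨h1, h2⟩
        · exact absurd (le_trans h1 hs₁) h2.2
        · exact absurd (le_trans h2 hs₂) h1.2
        · exact Or.inr ⟨h1, h2⟩
      · rintro (⟨h1, h2⟩ | ⟨h1, h2⟩)
        · exact ⟨Or.inl h1, Or.inl h2⟩
        · exact ⟨Or.inr h1, Or.inr h2⟩
    have hSle : (W₁ ⊓ H) ⊔ (W₂ ⊓ H) ≤ H := sup_le inf_le_right inf_le_right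
    have hlat : (W₁ ⊓ H) ⊓ (W₂ ⊓ H) = (W₁ ⊓ W₂) ⊓ H := by
      rw [inf_inf_inf_comm, inf_idem]
    have hsum := Submodule.finrank_sup_add_finrank_inf_eq (W₁ ⊓ H) (W₂ ⊓ H)
    rw [hlat, hWHe W₁ h₁, hWHe W₂ h₂] at hsum
    have hrkσ : Module.finrank K ↥(σ ((W₁ ⊓ H) ⊔ (W₂ ⊓ H))) =
        Module.finrank K ↥((W₁ ⊓ W₂) ⊓ H) := by
      rw [hσrank _ hSle]
      omega
    have hcard : (fJTPt σ e H W₁ ∩ fJTPt σ e H W₂).ncard =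
        (JTaux.psetP (W₁ ⊓ W₂) : Set (Pt K V)).ncard := by
      rw [hint, hσinf _ _ inf_le_right inf_le_right,
        Set.ncard_union_eq (JTaux.disjoint_psetP_opsetP (hσle _ hSle) _),
        JTaux.ncard_psetP_eq_of_finrank_eq hrkσ, ← JTaux.ncard_psetP_split H (W₁ ⊓ W₂)]
    have hkle : Module.finrank K ↥(W₁ ⊓ W₂) ≤ e := by
      by_contra hk
      push_neg at hk
      have heq : W₁ ⊓ W₂ = W₁ :=
        Submodule.eq_of_le_of_finrank_le inf_le_left (by rw [h₁.1]; omega)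
      exact hne (Submodule.eq_of_le_of_finrank_eq (heq ▸ inf_le_right)
        (by rw [h₁.1, h₂.1]))
    constructor
    · rintro (⟨-, -, h3⟩ | ⟨-, h2, -⟩ | ⟨h1, -, -⟩ | ⟨h1, -, -⟩)
      · rw [hcard]
        exact (hcard_iff _ hkle).2 h3
      · exact absurd h2.2 h₂.2
      · exact absurd h1.2 h₁.2
      · exact absurd h1.2 h₁.2
    · intro hc
      rw [hcard] at hc
      exact Or.inl ⟨h₁, h₂, (hcard_iff _ hkle).1 hc⟩
  -- key lemma, case 𝒜-ℬ
  have keyAB : ∀ W₁ ∈ setA e H, ∀ W₂ ∈ setB e H,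
      (twistedAdj e H W₁ W₂ ↔ (fJTPt σ e H W₁ ∩ fJTPt σ e H W₂).ncard = t) := by
    intro W₁ h₁ W₂ h₂
    have hs₁ : σ (W₁ ⊓ H) ≤ H := hσle _ inf_le_right
    have hσW₂ : σ W₂ ≤ H := hσle _ h₂.2
    have hint : fJTPt σ e H W₁ ∩ fJTPt σ e H W₂ =
        JTaux.psetP (σ ((W₁ ⊓ H) ⊔ W₂)) := by
      rw [hfA W₁ h₁, hfB W₂ h₂, ← hσinf _ _ inf_le_right h₂.2, ← JTaux.psetP_inter]
      ext P
      simp only [Set.mem_inter_iff, Set.mem_union]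
      constructor
      · rintro ⟨h1 | h1, h2⟩
        · exact ⟨h1, h2⟩
        · exact absurd (le_trans h2 hσW₂) h1.2
      · rintro ⟨h1, h2⟩
        exact ⟨Or.inl h1, h2⟩
    have hj : Module.finrank K ↥(W₁ ⊓ W₂) ≤ e - 1 := by
      have : Module.finrank K ↥(W₁ ⊓ W₂) ≤ Module.finrank K ↥W₂ := Submodule.finrank_mono (inf_le_right : W₁ ⊓ W₂ ≤ W₂)
      rw [h₂.1] at this
      exact this
    have hlat : (W₁ ⊓ H) ⊓ W₂ = W₁ ⊓ W₂ := by
      rw [inf_right_comm, inf_eq_left]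
      exact le_trans inf_le_right h₂.2
    have hsum := Submodule.finrank_sup_add_finrank_inf_eq (W₁ ⊓ H) W₂
    rw [hlat, hWHe W₁ h₁, h₂.1] at hsum
    have hrkσ : Module.finrank K ↥(σ ((W₁ ⊓ H) ⊔ W₂)) =
        Module.finrank K ↥(W₁ ⊓ W₂) + 1 := by
      rw [hσrank _ (sup_le inf_le_right h₂.2)]
      omega
    constructor
    · rintro (⟨-, h2, -⟩ | ⟨-, -, h3⟩ | ⟨h1, -, -⟩ | ⟨h1, -, -⟩)
      · exact absurd h₂.2 h2.2
      · have hW12 : W₁ ⊓ W₂ = W₂ := inf_eq_right.2 h3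
        rw [hint]
        refine (hcard_iff _ (by rw [hrkσ]; omega)).2 ?_
        rw [hrkσ, hW12, h₂.1]
        omega
      · exact absurd h1.2 h₁.2
      · exact absurd h1.2 h₁.2
    · intro hc
      rw [hint] at hc
      have hfe := (hcard_iff _ (by rw [hrkσ]; omega)).1 hc
      rw [hrkσ] at hfe
      have hW12 : W₁ ⊓ W₂ = W₂ :=
        Submodule.eq_of_le_of_finrank_eq inf_le_right (by rw [h₂.1]; omega)
      exact Or.inr (Or.inl ⟨h₁, h₂, hW12 ▸ inf_le_left⟩)
  -- key lemma, case ℬ-ℬ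
  have keyBB : ∀ W₁ ∈ setB e H, ∀ W₂ ∈ setB e H, W₁ ≠ W₂ →
      (twistedAdj e H W₁ W₂ ↔ (fJTPt σ e H W₁ ∩ fJTPt σ e H W₂).ncard = t) := by
    intro W₁ h₁ W₂ h₂ hne
    have hint : fJTPt σ e H W₁ ∩ fJTPt σ e H W₂ = JTaux.psetP (σ (W₁ ⊔ W₂)) := by
      rw [hfB W₁ h₁, hfB W₂ h₂, JTaux.psetP_inter, hσinf _ _ h₁.2 h₂.2]
    have hj1 : Module.finrank K ↥(W₁ ⊓ W₂) ≤ e - 1 := by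
      have : Module.finrank K ↥(W₁ ⊓ W₂) ≤ Module.finrank K ↥W₁ := Submodule.finrank_mono (inf_le_left : W₁ ⊓ W₂ ≤ W₁)
      rw [h₁.1] at this
      exact this
    have hj2 : Module.finrank K ↥(W₁ ⊓ W₂) ≠ e - 1 := by
      intro hEq
      have heq : W₁ ⊓ W₂ = W₁ :=
        Submodule.eq_of_le_of_finrank_eq inf_le_left (by rw [h₁.1, hEq])
      exact hne (Submodule.eq_of_le_of_finrank_eq (heq ▸ inf_le_right)
        (by rw [h₁.1, h₂.1]))
    have hsum := Submodule.finrank_sup_add_finrank_inf_eq W₁ W₂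
    rw [h₁.1, h₂.1] at hsum
    have hrkσ : Module.finrank K ↥(σ (W₁ ⊔ W₂)) =
        Module.finrank K ↥(W₁ ⊓ W₂) + 2 := by
      rw [hσrank _ (sup_le h₁.2 h₂.2)]
      omega
    constructor
    · rintro (⟨h1, -, -⟩ | ⟨h1, -, -⟩ | ⟨-, h2, -⟩ | ⟨-, -, h3⟩)
      · exact absurd h₁.2 h1.2
      · exact absurd h₁.2 h1.2
      · exact absurd h₂.2 h2.2
      · rw [hint]
        refine (hcard_iff _ (by rw [hrkσ]; omega)).2 ?_
        rw [hrkσ]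
        omega
    · intro hc
      rw [hint] at hc
      have hfe := (hcard_iff _ (by rw [hrkσ]; omega)).1 hc
      rw [hrkσ] at hfe
      exact Or.inr (Or.inr (Or.inr ⟨h₁, h₂, by omega⟩))
  -- assembled key lemma
  have key : ∀ W₁ ∈ setA e H ∪ setB e H, ∀ W₂ ∈ setA e H ∪ setB e H, W₁ ≠ W₂ →
      (twistedAdj e H W₁ W₂ ↔ (fJTPt σ e H W₁ ∩ fJTPt σ e H W₂).ncard = t) := by
    intro W₁ hW₁ W₂ hW₂ hne
    rcases hW₁ with h₁ | h₁ <;> rcases hW₂ with h₂ | h₂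
    · exact keyAA W₁ h₁ W₂ h₂ hne
    · exact keyAB W₁ h₁ W₂ h₂
    · rw [Set.inter_comm]
      constructor
      · intro h
        exact (keyAB W₂ h₂ W₁ h₁).1 (hadj_symm _ _ h)
      · intro h
        exact hadj_symm _ _ ((keyAB W₂ h₂ W₁ h₁).2 h)
    · exact keyBB W₁ h₁ W₂ h₂ hne
  -- injectivity of `f`
  have hmemA : ∀ W ∈ setA e H, ∀ w ∈ W, w ∉ H →
      ∀ W' ∈ setA e H, fJTPt σ e H W = fJTPt σ e H W' → w ∈ W' := by
    intro W hW w hwW hwH W' hW' hff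
    have hw0 : w ≠ 0 := fun h0 => hwH (h0 ▸ H.zero_mem)
    have hP : Submodule.span K {w} ≤ W := (Submodule.span_singleton_le_iff_mem w W).2 hwW
    have hPH : ¬ Submodule.span K {w} ≤ H :=
      fun h => hwH (h (Submodule.mem_span_singleton_self w))
    have hPf : (⟨Submodule.span K {w}, finrank_span_singleton hw0⟩ : Pt K V) ∈
        fJTPt σ e H W := by
      rw [hfA W hW]
      exact Or.inr ⟨hP, hPH⟩
    rw [hff, hfA W' hW'] at hPf
    rcases hPf with h | h
    · exact absurd (le_trans h (hσle _ inf_le_right)) hPH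
    · exact h.1 (Submodule.mem_span_singleton_self w)
  have hfinj : ∀ W₁ ∈ setA e H ∪ setB e H, ∀ W₂ ∈ setA e H ∪ setB e H,
      fJTPt σ e H W₁ = fJTPt σ e H W₂ → W₁ = W₂ := by
    have hAA : ∀ Wa ∈ setA e H, ∀ Wb ∈ setA e H,
        fJTPt σ e H Wa = fJTPt σ e H Wb → Wa ≤ Wb := by
      intro Wa ha Wb hb hab
      obtain ⟨w₀, hw₀W, hw₀H⟩ := SetLike.not_le_iff_exists.1 ha.2
      intro x hx
      by_cases hxH : x ∈ H
      · have h1 : x + w₀ ∈ Wb :=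
          hmemA Wa ha _ (Wa.add_mem hx hw₀W)
            (fun h => hw₀H (by simpa using H.sub_mem h hxH)) Wb hb hab
        have h2 : w₀ ∈ Wb := hmemA Wa ha _ hw₀W hw₀H Wb hb hab
        have h3 := Wb.sub_mem h1 h2
        simpa using h3
      · exact hmemA Wa ha x hx hxH Wb hb hab
    have hABimp : ∀ Wa ∈ setA e H, ∀ Wb ∈ setB e H,
        fJTPt σ e H Wa = fJTPt σ e H Wb → False := by
      intro Wa ha Wb hb hab
      obtain ⟨w₀, hw₀W, hw₀H⟩ := SetLike.not_le_iff_exists.1 ha.2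
      have hw0 : w₀ ≠ 0 := fun h0 => hw₀H (h0 ▸ H.zero_mem)
      have hPf : (⟨Submodule.span K {w₀}, finrank_span_singleton hw0⟩ : Pt K V) ∈
          fJTPt σ e H Wa := by
        rw [hfA Wa ha]
        exact Or.inr ⟨(Submodule.span_singleton_le_iff_mem w₀ Wa).2 hw₀W,
          fun h => hw₀H (h (Submodule.mem_span_singleton_self w₀))⟩
      rw [hab, hfB Wb hb] at hPf
      exact hw₀H ((hσle _ hb.2) (hPf (Submodule.mem_span_singleton_self w₀)))
    intro W₁ hW₁ W₂ hW₂ hff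
    rcases hW₁ with h₁ | h₁ <;> rcases hW₂ with h₂ | h₂
    · exact le_antisymm (hAA _ h₁ _ h₂ hff) (hAA _ h₂ _ h₁ hff.symm)
    · exact (hABimp _ h₁ _ h₂ hff).elim
    · exact (hABimp _ h₂ _ h₁ hff.symm).elim
    · have hle : ∀ Wa ∈ setB e H, ∀ Wb ∈ setB e H,
          fJTPt σ e H Wa = fJTPt σ e H Wb → σ Wa ≤ σ Wb := by
        intro Wa ha Wb hb hab
        apply JTaux.le_of_pts1_subset
        intro P hP1 hPle
        have hm : (⟨P, hP1⟩ : Pt K V) ∈ fJTPt σ e H Wa := by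
          rw [hfB Wa ha]
          exact hPle
        rw [hab, hfB Wb hb] at hm
        exact hm
      have hσeq : σ W₁ = σ W₂ := le_antisymm (hle _ h₁ _ h₂ hff) (hle _ h₂ _ h₁ hff.symm)
      have h5 := congrArg σ hσeq
      rwa [hσinv _ h₁.2, hσinv _ h₂.2] at h5
  -- `g` is injective on `𝒜 ∪ ℬ`, hence bijective
  have hα_inj : Function.Injective (fun P : Pt K V => α P) := α.injective
  have hginj : Set.InjOn g (setA e H ∪ setB e H) := by
    intro W₁ h₁ W₂ h₂ hgg
    apply hfinj W₁ h₁ W₂ h₂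
    have e₁ := (hg W₁ h₁).2
    have e₂ := (hg W₂ h₂).2
    have himg : (fun P => α P) '' fJTPt σ e H W₁ = (fun P => α P) '' fJTPt σ e H W₂ := by
      rw [← e₁, ← e₂, hgg]
    exact Set.image_injective.2 hα_inj himg
  have hmaps : Set.MapsTo g (setA e H ∪ setB e H) (setA e H ∪ setB e H) :=
    fun W hW => (hg W hW).1
  have hbij : Set.BijOn g (setA e H ∪ setB e H) (setA e H ∪ setB e H) :=
    ((Set.toFinite _).injOn_iff_bijOn_of_mapsTo hmaps).1 hginj
  refine ⟨hbij, ?_⟩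
  intro W₁ h₁ W₂ h₂
  by_cases hne : W₁ = W₂
  · subst hne
    constructor
    · rintro ⟨h, -⟩
      exact absurd rfl h
    · rintro ⟨h, -⟩
      exact absurd rfl h
  · have hgne : g W₁ ≠ g W₂ := fun h => hne (hginj h₁ h₂ h)
    have hcardeq : (fJTPt σ e H (g W₁) ∩ fJTPt σ e H (g W₂)).ncard =
        (fJTPt σ e H W₁ ∩ fJTPt σ e H W₂).ncard := by
      rw [(hg W₁ h₁).2, (hg W₂ h₂).2, ← Set.image_inter hα_inj,
        Set.ncard_image_of_injective _ hα_inj]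
    constructor
    · rintro ⟨-, hadj⟩
      refine ⟨hgne, ?_⟩
      apply (key (g W₁) (hg W₁ h₁).1 (g W₂) (hg W₂ h₂).1 hgne).2
      rw [hcardeq]
      exact (key W₁ h₁ W₂ h₂ hne).1 hadj
    · rintro ⟨-, hadj⟩
      refine ⟨hne, ?_⟩
      apply (key W₁ h₁ W₂ h₂ hne).2
      rw [← hcardeq]
      exact (key _ (hg W₁ h₁).1 _ (hg W₂ h₂).1 hgne).1 hadj
end
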